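/- arXiv:0906.4648 — 3 statements merged into one kernel-verified Lean document; each statement's English description precedes it below -/
import Mathlib

section
/- Let φ, ψ : ℝ/ℤ → ℝ be Morse measuring functions on the circle. If the infimum, over all homeomorphisms f : ℝ/ℤ → ℝ/ℤ, of sup_{x ∈ ℝ/ℤ} |φ(x) − ψ(f(x))| equals 0 (i.e. the natural pseudo-distance between (ℝ/ℤ, φ) and (ℝ/ℤ, ψ) vanishes), then there exists an optimal homeomorphism, i.e. a homeomorphism f : ℝ/ℤ → ℝ/ℤ such that ψ(f(x)) = φ(x) for every x ∈ ℝ/ℤ. -/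
open Filter Topology

noncomputable section OptHomeoAux
open Set

local notation "𝕊" => AddCircle (1 : ℝ)

instance : Fact ((0:ℝ) < 1) := ⟨one_pos⟩

lemma OH.coe_int (m : ℤ) : ((m : ℝ) : 𝕊) = 0 := by
  rw [QuotientAddGroup.eq_zero_iff]
  exact ⟨m, by simp⟩

lemma OH.coe_add_int (x : ℝ) (m : ℤ) : ((x + m : ℝ) : 𝕊) = (x : 𝕊) := by
  have h : ((x + m : ℝ) : 𝕊) = (x : 𝕊) + ((m:ℝ) : 𝕊) := rfl
  rw [h, OH.coe_int, add_zero]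

lemma OH.coe_eq_of_Ioo {b t t' : ℝ} (ht : t ∈ Ioo b (b+1)) (ht' : t' ∈ Ioo b (b+1))
    (h : (t : 𝕊) = (t' : 𝕊)) : t = t' := by
  rw [QuotientAddGroup.eq_iff_sub_mem] at h
  obtain ⟨k, hk⟩ := AddSubgroup.mem_zmultiples_iff.mp h
  have hk' : (k : ℝ) = t - t' := by simpa using hk
  have h1 : t - t' < 1 := by linarith [ht.1, ht.2, ht'.1, ht'.2]
  have h2 : (-1 : ℝ) < t - t' := by linarith [ht.1, ht.2, ht'.1, ht'.2]
  have hk0 : k = 0 := by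
    have hlt : (k:ℝ) < 1 := hk' ▸ h1
    have hgt : (-1:ℝ) < (k:ℝ) := hk' ▸ h2
    have : k < 1 := by exact_mod_cast hlt
    have : -1 < k := by exact_mod_cast hgt
    omega
  have : t - t' = 0 := by rw [← hk', hk0]; simp
  linarith

lemma OH.addint {F : ℝ → ℝ} (h : ∀ t, F (t+1) = F t + 1) (t : ℝ) (m : ℤ) :
    F (t + m) = F t + m := by
  have key : ∀ (n : ℕ) (s : ℝ), F (s + n) = F s + n := by
    intro n
    induction n with
    | zero => simp
    | succ k ih =>
        intro s
        have e : s + ((k:ℝ) + 1) = (s + k) + 1 := by ring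
        push_cast
        rw [e, h (s + k), ih s]
        ring
  rcases le_or_gt 0 m with hm | hm
  · obtain ⟨n, rfl⟩ := Int.eq_ofNat_of_zero_le hm
    push_cast
    exact key n t
  · obtain ⟨n, rfl⟩ : ∃ n : ℕ, m = -n := ⟨(-m).toNat, by omega⟩
    have := key n (t - n)
    have e : t - (n:ℝ) + n = t := by ring
    rw [e] at this
    push_cast
    rw [show t + -(n:ℝ) = t - n from by ring]
    linarith


lemma OH.not_const {g : ℝ → ℝ}
    (hM : ∀ t : ℝ, deriv g t ≠ 0 ∨ deriv (deriv g) t ≠ 0)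
    {a b c : ℝ} (hab : a < b) (h : ∀ t ∈ Ioo a b, g t = c) : False := by
  have hmem : (a+b)/2 ∈ Ioo a b := ⟨by linarith, by linarith⟩
  have hd : ∀ s ∈ Ioo a b, deriv g s = 0 := by
    intro s hs
    have : g =ᶠ[𝓝 s] fun _ => c := eventually_of_mem (isOpen_Ioo.mem_nhds hs) h
    rw [this.deriv_eq, deriv_const]
  have hd2 : deriv (deriv g) ((a+b)/2) = 0 := by
    have : deriv g =ᶠ[𝓝 ((a+b)/2)] fun _ => 0 :=
      eventually_of_mem (isOpen_Ioo.mem_nhds hmem) hd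
    rw [this.deriv_eq, deriv_const]
  rcases hM ((a+b)/2) with h1 | h1
  · exact h1 (hd _ hmem)
  · exact h1 hd2

lemma OH.mono_or_anti {F : ℝ → ℝ} {b e : ℝ} (hbe : b < e)
    (hc : ContinuousOn F (Ioo b e)) (hi : InjOn F (Ioo b e)) :
    StrictMonoOn F (Ioo b e) ∨ StrictAntiOn F (Ioo b e) := by
  set c := b + (e-b)/3 with hc_def
  set d := b + 2*(e-b)/3 with hd_def
  have hcd : c < d := by rw [hc_def, hd_def]; linarith
  have hcm : c ∈ Ioo b e := ⟨by rw [hc_def]; linarith, by rw [hc_def]; linarith⟩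
  have hdm : d ∈ Ioo b e := ⟨by rw [hd_def]; linarith, by rw [hd_def]; linarith⟩
  -- for any x < y in Ioo b e, F is strict mono or anti on a big Icc containing x,y,c,d
  have main : ∀ x ∈ Ioo b e, ∀ y ∈ Ioo b e, x < y →
      (StrictMonoOn F (Icc (min x c) (max y d)) ∨ StrictAntiOn F (Icc (min x c) (max y d))) := by
    intro x hx y hy hxy
    have hsub : Icc (min x c) (max y d) ⊆ Ioo b e := by
      apply Icc_subset_Ioo
      · exact lt_min hx.1 hcm.1
      · exact max_lt hy.2 hdm.2
    have h1 : min x c ≤ max y d := le_trans (min_le_left _ _) (le_trans hxy.le (le_max_left _ _))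
    exact ContinuousOn.strictMonoOn_of_injOn_Icc' h1 (hc.mono hsub) (hi.mono hsub)
  rcases ContinuousOn.strictMonoOn_of_injOn_Icc' hcd.le
      (hc.mono (Icc_subset_Ioo hcm.1 hdm.2)) (hi.mono (Icc_subset_Ioo hcm.1 hdm.2)) with hmono | hanti
  · left
    intro x hx y hy hxy
    rcases main x hx y hy hxy with h | h
    · exact h ⟨min_le_left _ _, le_trans hxy.le (le_max_left _ _)⟩
        ⟨le_trans (min_le_left _ _) hxy.le, le_max_left _ _⟩ hxy
    · exfalso
      have hcmem : c ∈ Icc (min x c) (max y d) :=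
        ⟨min_le_right _ _, le_trans hcd.le (le_max_right _ _)⟩
      have hdmem : d ∈ Icc (min x c) (max y d) :=
        ⟨le_trans (min_le_right _ _) hcd.le, le_max_right _ _⟩
      exact absurd (hmono ⟨le_refl c, hcd.le⟩ ⟨hcd.le, le_refl d⟩ hcd)
        (not_lt.mpr (h hcmem hdmem hcd).le)
  · right
    intro x hx y hy hxy
    rcases main x hx y hy hxy with h | h
    · exfalso
      have hcmem : c ∈ Icc (min x c) (max y d) :=
        ⟨min_le_right _ _, le_trans hcd.le (le_max_right _ _)⟩
      have hdmem : d ∈ Icc (min x c) (max y d) :=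
        ⟨le_trans (min_le_right _ _) hcd.le, le_max_right _ _⟩
      exact absurd (h hcmem hdmem hcd)
        (not_lt.mpr (hanti ⟨le_refl c, hcd.le⟩ ⟨hcd.le, le_refl d⟩ hcd).le)
    · exact h ⟨min_le_left _ _, le_trans hxy.le (le_max_left _ _)⟩
        ⟨le_trans (min_le_left _ _) hxy.le, le_max_left _ _⟩ hxy

lemma OH.glue (b : ℝ) (F₀ : ℝ → ℝ) (u : 𝕊 → 𝕊) (hub : u ((b : ℝ) : 𝕊) = 0)
    (hmono : StrictMonoOn F₀ (Ioo b (b+1)))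
    (hmem : ∀ t ∈ Ioo b (b+1), F₀ t ∈ Ioo (0:ℝ) 1)
    (hu : ∀ t ∈ Ioo b (b+1), ((F₀ t : ℝ) : 𝕊) = u ((t : ℝ) : 𝕊))
    (hsurj : ∀ y ∈ Ioo (0:ℝ) 1, ∃ t ∈ Ioo b (b+1), F₀ t = y) :
    ∃ F G : ℝ → ℝ, StrictMono F ∧ (∀ t, F (t+1) = F t + 1) ∧ (∀ t, F (G t) = t) ∧
      F 0 ∈ Ico (0:ℝ) 1 ∧ ∀ t : ℝ, ((F t : ℝ) : 𝕊) = u ((t : ℝ) : 𝕊) := by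
  classical
  set gq : ℝ → ℝ := fun τ => if τ = 0 then 0 else F₀ (b + τ) with hgq
  have hgq_mem : ∀ τ ∈ Ico (0:ℝ) 1, gq τ ∈ Ico (0:ℝ) 1 := by
    intro τ hτ
    by_cases h0 : τ = 0
    · simp [hgq, h0]
    · have hτ' : b + τ ∈ Ioo b (b+1) := ⟨by have := lt_of_le_of_ne hτ.1 (Ne.symm h0); linarith, by linarith [hτ.2]⟩
      have := hmem _ hτ'
      simp only [hgq, if_neg h0]
      exact ⟨this.1.le, this.2⟩
  have hgq_mono : StrictMonoOn gq (Ico (0:ℝ) 1) := by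
    intro τ₁ h1 τ₂ h2 h12
    by_cases h0 : τ₁ = 0
    · subst h0
      have h2' : τ₂ ≠ 0 := by linarith
      have hτ' : b + τ₂ ∈ Ioo b (b+1) := ⟨by linarith, by linarith [h2.2]⟩
      simp only [hgq, if_pos rfl, if_neg h2']
      exact (hmem _ hτ').1
    · have h02 : τ₂ ≠ 0 := by intro h; rw [h] at h12; exact absurd h12 (not_lt.mpr h1.1)
      have hτ1 : b + τ₁ ∈ Ioo b (b+1) := ⟨by nlinarith [lt_of_le_of_ne h1.1 (Ne.symm h0)], by linarith [h1.2]⟩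
      have hτ2 : b + τ₂ ∈ Ioo b (b+1) := ⟨by linarith [lt_of_le_of_ne h1.1 (Ne.symm h0)], by linarith [h2.2]⟩
      simp only [hgq, if_neg h0, if_neg h02]
      exact hmono hτ1 hτ2 (by linarith)
  set F : ℝ → ℝ := fun t => (⌊t - b⌋ : ℝ) + gq (Int.fract (t - b)) with hF
  have hfract_mem : ∀ t : ℝ, Int.fract (t - b) ∈ Ico (0:ℝ) 1 :=
    fun t => ⟨Int.fract_nonneg _, Int.fract_lt_one _⟩
  have hFmono : StrictMono F := by
    intro s t hst
    have hfloor : ⌊s - b⌋ ≤ ⌊t - b⌋ := Int.floor_le_floor (by linarith)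
    rcases eq_or_lt_of_le hfloor with heq | hlt
    · have hfr : Int.fract (s - b) < Int.fract (t - b) := by
        unfold Int.fract
        rw [← heq]
        push_cast
        linarith
      simp only [hF]
      rw [← heq]
      have := hgq_mono (hfract_mem s) (hfract_mem t) hfr
      linarith
    · simp only [hF]
      have h1 : gq (Int.fract (s - b)) < 1 := (hgq_mem _ (hfract_mem s)).2
      have h2 : 0 ≤ gq (Int.fract (t - b)) := (hgq_mem _ (hfract_mem t)).1
      have : (⌊s - b⌋ : ℝ) + 1 ≤ (⌊t - b⌋ : ℝ) := by exact_mod_cast hlt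
      linarith
  have hFper : ∀ t, F (t+1) = F t + 1 := by
    intro t
    simp only [hF]
    have e1 : t + 1 - b = (t - b) + 1 := by ring
    rw [e1, Int.fract_add_one, Int.floor_add_one]
    push_cast
    ring
  have hFcoe : ∀ t : ℝ, ((F t : ℝ) : 𝕊) = u ((t : ℝ) : 𝕊) := by
    intro t
    set m := ⌊t - b⌋ with hm
    set τ := Int.fract (t - b) with hτdef
    have ht_eq : t = b + τ + m := by
      rw [hτdef, Int.fract]
      push_cast
      ring
    have hcoe_t : ((t : ℝ) : 𝕊) = ((b + τ : ℝ) : 𝕊) := by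
      rw [ht_eq]; exact OH.coe_add_int (b + τ) m
    have hFval : F t = gq τ + m := by simp only [hF, ← hm, ← hτdef]; ring
    rw [hFval, OH.coe_add_int (gq τ) m, hcoe_t]
    by_cases h0 : τ = 0
    · rw [h0]
      simp only [hgq, if_pos rfl, add_zero]
      rw [hub]
      simp
    · have hτmem : τ ∈ Ioo (0:ℝ) 1 :=
        ⟨lt_of_le_of_ne (hfract_mem t).1 (Ne.symm h0), (hfract_mem t).2⟩
      have hbτ : b + τ ∈ Ioo b (b+1) := ⟨by linarith [hτmem.1], by linarith [hτmem.2]⟩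
      simp only [hgq, if_neg h0]
      exact hu _ hbτ
  have hFsurj : Function.Surjective F := by
    intro y
    by_cases h0 : Int.fract y = 0
    · refine ⟨b + ⌊y⌋, ?_⟩
      simp only [hF]
      have e : b + (⌊y⌋:ℝ) - b = (⌊y⌋:ℝ) := by ring
      rw [e, Int.fract_intCast, Int.floor_intCast]
      have hgq0 : gq 0 = 0 := by simp [hgq]
      rw [hgq0]
      unfold Int.fract at h0
      linarith
    · obtain ⟨t₀, ht₀, hFt₀⟩ := hsurj (Int.fract y)
        ⟨lt_of_le_of_ne (Int.fract_nonneg y) (Ne.symm h0), Int.fract_lt_one y⟩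
      refine ⟨t₀ + ⌊y⌋, ?_⟩
      simp only [hF]
      have e : t₀ + (⌊y⌋:ℝ) - b = (t₀ - b) + (⌊y⌋:ℝ) := by ring
      rw [e, Int.fract_add_intCast, Int.floor_add_intCast]
      have hfr : Int.fract (t₀ - b) = t₀ - b := by
        rw [Int.fract_eq_self]
        constructor <;> [linarith [ht₀.1]; linarith [ht₀.2]]
      rw [hfr]
      have hne : t₀ - b ≠ 0 := by have := ht₀.1; intro h; linarith
      simp only [hgq, if_neg hne]
      have : b + (t₀ - b) = t₀ := by ring
      rw [this, hFt₀]
      have hfl : ⌊t₀ - b⌋ = 0 :=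
        Int.floor_eq_zero_iff.mpr ⟨by linarith [ht₀.1], by linarith [ht₀.2]⟩
      rw [hfl]
      push_cast
      have := Int.floor_add_fract y
      linarith
  have hG := Function.rightInverse_invFun hFsurj
  set m0 : ℤ := ⌊F 0⌋ with hm0
  refine ⟨fun t => F t - m0, fun t => Function.invFun F (t + m0), ?_, ?_, ?_, ?_, ?_⟩
  · intro s t hst
    have := hFmono hst
    simp only
    linarith
  · intro t; simp only; rw [hFper]; ring
  · intro t; simp only; rw [hG (t + m0)]; ring
  · constructor
    · simp only
      have := Int.floor_le (F 0)
      linarith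
    · simp only
      have := Int.lt_floor_add_one (F 0)
      linarith
  · intro t
    simp only
    have e : (F t - m0 : ℝ) = F t + ((-m0 : ℤ) : ℝ) := by push_cast; ring
    rw [e, OH.coe_add_int, hFcoe]

lemma OH.coe_eq_iff {t t' : ℝ} (h : |t - t'| < 1) : ((t:ℝ) : 𝕊) = (t' : 𝕊) ↔ t = t' := by
  constructor
  · intro he
    rw [QuotientAddGroup.eq_iff_sub_mem] at he
    obtain ⟨k, hk⟩ := AddSubgroup.mem_zmultiples_iff.mp he
    have hk' : (k : ℝ) = t - t' := by simpa using hk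
    have h1 : |(k:ℝ)| < 1 := hk' ▸ h
    have hk0 : k = 0 := by
      have : (-1:ℝ) < k ∧ (k:ℝ) < 1 := abs_lt.mp h1
      have h2 : -1 < k := by exact_mod_cast this.1
      have h3 : k < 1 := by exact_mod_cast this.2
      omega
    have : t - t' = 0 := by rw [← hk', hk0]; simp
    linarith
  · intro he; rw [he]

lemma OH.coe_neg (x : ℝ) : ((-x : ℝ) : 𝕊) = -((x:ℝ) : 𝕊) := rfl

lemma OH.lift_exists (f : 𝕊 ≃ₜ 𝕊) :
    ∃ F G : ℝ → ℝ, StrictMono F ∧ (∀ t, F (t+1) = F t + 1) ∧ (∀ t, F (G t) = t) ∧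
      F 0 ∈ Ico (0:ℝ) 1 ∧
      ((∀ t : ℝ, ((F t : ℝ) : 𝕊) = f ((t:ℝ) : 𝕊)) ∨
        (∀ t : ℝ, ((F t : ℝ) : 𝕊) = - f ((t:ℝ) : 𝕊))) := by
  classical
  obtain ⟨b, hb⟩ := QuotientAddGroup.mk_surjective (f.symm 0)
  have hfb : f ((b:ℝ):𝕊) = 0 := by rw [hb]; exact f.apply_symm_apply 0
  set ph := AddCircle.openPartialHomeomorphCoe (1:ℝ) 0 with hph
  have hcoe_cont : Continuous (fun t : ℝ => ((t:ℝ) : 𝕊)) := AddCircle.continuous_mk' 1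
  have hne : ∀ t ∈ Ioo b (b+1), f ((t:ℝ):𝕊) ≠ ((0:ℝ):𝕊) := by
    intro t ht h
    have h2 : f ((t:ℝ):𝕊) = f ((b:ℝ):𝕊) := by
      rw [hfb, h]; simp
    have h3 : ((t:ℝ):𝕊) = ((b:ℝ):𝕊) := f.injective h2
    have h4 : t = b := (OH.coe_eq_iff (by rw [abs_lt]; constructor <;>
      [linarith [ht.1, ht.2]; linarith [ht.1, ht.2]])).mp h3
    linarith [ht.1]
  have hmemtarget : ∀ t ∈ Ioo b (b+1), f ((t:ℝ):𝕊) ∈ ph.target := by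
    intro t ht
    simp only [hph, AddCircle.openPartialHomeomorphCoe]
    exact hne t ht
  set F₀ : ℝ → ℝ := fun t => ((ph.symm (f ((t:ℝ):𝕊))) : ℝ) with hF₀
  have hmem : ∀ t ∈ Ioo b (b+1), F₀ t ∈ Ioo (0:ℝ) 1 := by
    intro t ht
    have := ph.map_target (hmemtarget t ht)
    simpa [hph, AddCircle.openPartialHomeomorphCoe, hF₀] using this
  have hπ : ∀ t ∈ Ioo b (b+1), ((F₀ t : ℝ) : 𝕊) = f ((t:ℝ):𝕊) := by
    intro t ht
    exact ph.right_inv (hmemtarget t ht)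
  have hinj : InjOn F₀ (Ioo b (b+1)) := by
    intro t ht t' ht' h
    have h1 : f ((t:ℝ):𝕊) = f ((t':ℝ):𝕊) := by
      rw [← hπ t ht, ← hπ t' ht', h]
    have h2 := f.injective h1
    exact OH.coe_eq_of_Ioo ht ht' h2
  have hcont : ContinuousOn F₀ (Ioo b (b+1)) := by
    intro t ht
    apply ContinuousAt.continuousWithinAt
    have h1 : ContinuousAt (⇑ph.symm) (f ((t:ℝ):𝕊)) := ph.continuousAt_symm (hmemtarget t ht)
    have h3 : ContinuousAt (⇑ph.symm ∘ ⇑f) ((t:ℝ):𝕊) := h1.comp f.continuous.continuousAt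
    show ContinuousAt ((⇑ph.symm ∘ ⇑f) ∘ (fun s : ℝ => ((s:ℝ):𝕊))) t
    exact h3.comp hcoe_cont.continuousAt
  have hsurjI : ∀ y ∈ Ioo (0:ℝ) 1, ∃ t ∈ Ioo b (b+1), F₀ t = y := by
    intro y hy
    have hy0 : ((y:ℝ):𝕊) ≠ 0 := by
      intro h
      have : ((y:ℝ):𝕊) = ((0:ℝ):𝕊) := by rw [h]; simp
      have := (OH.coe_eq_iff (by rw [abs_lt]; constructor <;> [linarith [hy.1, hy.2]; linarith [hy.1, hy.2]])).mp this
      linarith [hy.1]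
    set x := f.symm ((y:ℝ):𝕊) with hx
    set tt := ((AddCircle.equivIco 1 b x : Ico b (b+1)) : ℝ) with htt
    have ht_mem : tt ∈ Ico b (b+1) := (AddCircle.equivIco 1 b x).2
    have hxt : ((tt:ℝ):𝕊) = x := (AddCircle.equivIco 1 b).symm_apply_apply x
    have hfx : f x = ((y:ℝ):𝕊) := f.apply_symm_apply _
    have ht_ne : tt ≠ b := by
      intro h
      rw [h] at hxt
      rw [← hxt] at hfx
      rw [hfb] at hfx
      exact hy0 hfx.symm
    have ht_Ioo : tt ∈ Ioo b (b+1) := ⟨lt_of_le_of_ne ht_mem.1 (Ne.symm ht_ne), ht_mem.2⟩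
    refine ⟨tt, ht_Ioo, ?_⟩
    have h1 : ((F₀ tt : ℝ) : 𝕊) = ((y:ℝ):𝕊) := by rw [hπ tt ht_Ioo, hxt, hfx]
    have hFm := hmem tt ht_Ioo
    exact (OH.coe_eq_iff (by rw [abs_lt]; constructor <;>
      [linarith [hFm.1, hFm.2, hy.1, hy.2]; linarith [hFm.1, hFm.2, hy.1, hy.2]])).mp h1
  rcases OH.mono_or_anti (by linarith : b < b + 1) hcont hinj with hmono | hanti
  · obtain ⟨F, G, hF1, hF2, hF3, hF4, hF5⟩ :=
      OH.glue b F₀ (⇑f) (by rw [hfb]) hmono hmem hπ hsurjI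
    exact ⟨F, G, hF1, hF2, hF3, hF4, Or.inl hF5⟩
  · obtain ⟨F, G, hF1, hF2, hF3, hF4, hF5⟩ :=
      OH.glue b (fun t => 1 - F₀ t) (fun x => -(f x))
        (show -f ((b:ℝ):𝕊) = 0 by rw [hfb, neg_zero])
        (by
          intro t ht t' ht' h
          simp only
          have := hanti ht ht' h
          linarith)
        (by
          intro t ht
          have := hmem t ht
          exact ⟨by linarith [this.2], by linarith [this.1]⟩)
        (by
          intro t ht
          have e : (1 - F₀ t : ℝ) = -F₀ t + ((1:ℤ):ℝ) := by push_cast; ring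
          rw [e, OH.coe_add_int, OH.coe_neg, hπ t ht])
        (by
          intro y hy
          obtain ⟨t, ht, hFt⟩ := hsurjI (1 - y) ⟨by linarith [hy.2], by linarith [hy.1]⟩
          exact ⟨t, ht, by linarith⟩)
    exact ⟨F, G, hF1, hF2, hF3, hF4, Or.inr hF5⟩

lemma OH.ultra_limit (𝒰 : Ultrafilter ℕ) (H : ℕ → ℝ → ℝ) (lo hi : ℝ → ℝ)
    (hb : ∀ t : ℝ, ∀ᶠ n in (𝒰 : Filter ℕ), H n t ∈ Icc (lo t) (hi t)) :
    ∃ L : ℝ → ℝ, ∀ t, Tendsto (fun n => H n t) (𝒰 : Filter ℕ) (𝓝 (L t)) := by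
  have h : ∀ t : ℝ, ∃ x, Tendsto (fun n => H n t) (𝒰 : Filter ℕ) (𝓝 x) := by
    intro t
    obtain ⟨x, -, hx⟩ := (isCompact_Icc (a := lo t) (b := hi t)).ultrafilter_le_nhds
      (𝒰.map (fun n => H n t)) (by rw [Ultrafilter.coe_map, le_principal_iff, mem_map]; exact hb t)
    exact ⟨x, hx⟩
  exact ⟨fun t => (h t).choose, fun t => (h t).choose_spec⟩

lemma OH.respects {H : ℝ → ℝ} (hH : ∀ (t : ℝ) (m : ℤ), H (t + m) = H t + m)
    {x y : ℝ} (hxy : QuotientAddGroup.leftRel (AddSubgroup.zmultiples (1:ℝ)) x y) :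
    QuotientAddGroup.leftRel (AddSubgroup.zmultiples (1:ℝ)) (H x) (H y) := by
  rw [QuotientAddGroup.leftRel_apply] at hxy ⊢
  obtain ⟨k, hk⟩ := AddSubgroup.mem_zmultiples_iff.mp hxy
  have hk' : (k:ℝ) = -x + y := by simpa using hk
  have hy : y = x + k := by linarith [hk']
  rw [hy, hH x k]
  exact AddSubgroup.mem_zmultiples_iff.mpr ⟨k, by simp⟩

lemma OH.key (φ ψ : 𝕊 → ℝ)
    (hφc : Continuous (fun t : ℝ => φ ((t:ℝ):𝕊)))
    (hψc : Continuous (fun t : ℝ => ψ ((t:ℝ):𝕊)))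
    (hφM : ∀ (a b c : ℝ), a < b → ¬ (∀ t ∈ Ioo a b, φ ((t:ℝ):𝕊) = c))
    (hψM : ∀ (a b c : ℝ), a < b → ¬ (∀ t ∈ Ioo a b, ψ ((t:ℝ):𝕊) = c))
    (𝒰 : Ultrafilter ℕ) (h𝒰 : (𝒰 : Filter ℕ) ≤ atTop)
    (F G : ℕ → ℝ → ℝ) (ε : ℕ → ℝ) (hε : Tendsto ε atTop (𝓝 0))
    (hyp : ∀ᶠ n in (𝒰 : Filter ℕ), StrictMono (F n) ∧ (∀ t, F n (t+1) = F n t + 1) ∧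
      (∀ t, F n (G n t) = t) ∧ F n 0 ∈ Ico (0:ℝ) 1 ∧
      ∀ t : ℝ, |φ ((t:ℝ):𝕊) - ψ (((F n t : ℝ)):𝕊)| ≤ ε n) :
    ∃ f : 𝕊 ≃ₜ 𝕊, ∀ x, ψ (f x) = φ x := by
  classical
  -- extended eventual facts
  have hyp' : ∀ᶠ n in (𝒰 : Filter ℕ), StrictMono (F n) ∧ (∀ t, F n (t+1) = F n t + 1) ∧
      (∀ t, F n (G n t) = t) ∧ F n 0 ∈ Ico (0:ℝ) 1 ∧
      (∀ t : ℝ, |φ ((t:ℝ):𝕊) - ψ (((F n t : ℝ)):𝕊)| ≤ ε n) ∧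
      StrictMono (G n) ∧ (∀ t, G n (t+1) = G n t + 1) ∧ G n 0 ∈ Icc (-1:ℝ) 0 ∧
      (∀ t : ℝ, |ψ ((t:ℝ):𝕊) - φ (((G n t : ℝ)):𝕊)| ≤ ε n) := by
    refine hyp.mono ?_
    rintro n ⟨h1, h2, h3, h4, h5⟩
    have hGmono : StrictMono (G n) := by
      intro u v huv
      have : F n (G n u) < F n (G n v) := by rw [h3 u, h3 v]; exact huv
      exact h1.lt_iff_lt.mp this
    have hGper : ∀ t, G n (t+1) = G n t + 1 := by
      intro t
      apply h1.injective
      rw [h3 (t+1), h2 (G n t), h3 t]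
    have hG0 : G n 0 ∈ Icc (-1:ℝ) 0 := by
      constructor
      · have hm1 : F n (-1:ℝ) = F n 0 - 1 := by
          have := OH.addint h2 0 (-1)
          rw [zero_add] at this
          push_cast at this
          rw [this]; ring
        have : F n (-1:ℝ) < F n (G n 0) := by rw [h3 0, hm1]; linarith [h4.2]
        exact (h1.lt_iff_lt.mp this).le
      · have : F n (G n 0) ≤ F n 0 := by rw [h3 0]; exact h4.1
        exact h1.le_iff_le.mp this
    have hGrel : ∀ t : ℝ, |ψ ((t:ℝ):𝕊) - φ (((G n t : ℝ)):𝕊)| ≤ ε n := by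
      intro t
      have := h5 (G n t)
      rw [h3 t] at this
      rwa [abs_sub_comm] at this
    exact ⟨h1, h2, h3, h4, h5, hGmono, hGper, hG0, hGrel⟩
  -- bounds
  have hFbound : ∀ t : ℝ, ∀ᶠ n in (𝒰 : Filter ℕ), F n t ∈ Icc ((⌊t⌋:ℝ)) ((⌊t⌋:ℝ)+2) := by
    intro t
    refine hyp'.mono ?_
    rintro n ⟨h1, h2, h3, h4, -⟩
    have hint : ∀ m : ℤ, F n ((m:ℝ)) = F n 0 + m := by
      intro m
      have := OH.addint h2 0 m
      rwa [zero_add] at this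
    constructor
    · have h6 : F n ((⌊t⌋:ℝ)) ≤ F n t := h1.monotone (Int.floor_le t)
      rw [hint ⌊t⌋] at h6
      linarith [h4.1]
    · have h6 : F n t ≤ F n ((⌊t⌋:ℝ)+1) := h1.monotone (le_of_lt (Int.lt_floor_add_one t))
      have e : ((⌊t⌋:ℝ)+1) = (((⌊t⌋+1 : ℤ)):ℝ) := by push_cast; ring
      rw [e, hint (⌊t⌋+1)] at h6
      push_cast at h6
      linarith [h4.2]
  have hGbound : ∀ t : ℝ, ∀ᶠ n in (𝒰 : Filter ℕ), G n t ∈ Icc ((⌊t⌋:ℝ)-1) ((⌊t⌋:ℝ)+1) := by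
    intro t
    refine hyp'.mono ?_
    rintro n ⟨-, -, -, -, -, h6, h7, h8, -⟩
    have hint : ∀ m : ℤ, G n ((m:ℝ)) = G n 0 + m := by
      intro m
      have := OH.addint h7 0 m
      rwa [zero_add] at this
    constructor
    · have h9 : G n ((⌊t⌋:ℝ)) ≤ G n t := h6.monotone (Int.floor_le t)
      rw [hint ⌊t⌋] at h9
      linarith [h8.1]
    · have h9 : G n t ≤ G n ((⌊t⌋:ℝ)+1) := h6.monotone (le_of_lt (Int.lt_floor_add_one t))
      have e : ((⌊t⌋:ℝ)+1) = (((⌊t⌋+1 : ℤ)):ℝ) := by push_cast; ring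
      rw [e, hint (⌊t⌋+1)] at h9
      push_cast at h9
      linarith [h8.2]
  obtain ⟨A, hA⟩ := OH.ultra_limit 𝒰 F (fun t => (⌊t⌋:ℝ)) (fun t => (⌊t⌋:ℝ)+2) hFbound
  obtain ⟨B, hB⟩ := OH.ultra_limit 𝒰 G (fun t => (⌊t⌋:ℝ)-1) (fun t => (⌊t⌋:ℝ)+1) hGbound
  have hεU : Tendsto ε (𝒰 : Filter ℕ) (𝓝 0) := hε.mono_left h𝒰
  -- A is monotone
  have hAmono : Monotone A := by
    intro s t hst
    refine le_of_tendsto_of_tendsto (hA s) (hA t) ?_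
    exact hyp'.mono fun n hn => hn.1.monotone hst
  have hAper : ∀ t, A (t+1) = A t + 1 := by
    intro t
    refine tendsto_nhds_unique (hA (t+1)) ?_
    have h1 : Tendsto (fun n => F n t + 1) (𝒰 : Filter ℕ) (𝓝 (A t + 1)) :=
      (hA t).add_const 1
    exact h1.congr' (hyp'.mono fun n hn => (hn.2.1 t).symm)
  have hAint := OH.addint hAper
  -- limit relations
  have hAψ : ∀ t : ℝ, ψ (((A t : ℝ)):𝕊) = φ ((t:ℝ):𝕊) := by
    intro t
    have h1 : Tendsto (fun n => ψ (((F n t : ℝ)):𝕊)) (𝒰 : Filter ℕ) (𝓝 (ψ (((A t : ℝ)):𝕊))) :=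
      (hψc.tendsto (A t)).comp (hA t)
    have h2 : Tendsto (fun n => ψ (((F n t : ℝ)):𝕊)) (𝒰 : Filter ℕ) (𝓝 (φ ((t:ℝ):𝕊))) := by
      rw [tendsto_iff_dist_tendsto_zero]
      have hsq : Tendsto (fun n => |ψ (((F n t : ℝ)):𝕊) - φ ((t:ℝ):𝕊)|) (𝒰 : Filter ℕ) (𝓝 0) := by
        apply squeeze_zero' (Eventually.of_forall fun n => abs_nonneg _)
          (hyp'.mono fun n hn => by rw [abs_sub_comm]; exact hn.2.2.2.2.1 t) hεU
      simpa [Real.dist_eq] using hsq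
    exact tendsto_nhds_unique h1 h2
  have hBφ : ∀ t : ℝ, φ (((B t : ℝ)):𝕊) = ψ ((t:ℝ):𝕊) := by
    intro t
    have h1 : Tendsto (fun n => φ (((G n t : ℝ)):𝕊)) (𝒰 : Filter ℕ) (𝓝 (φ (((B t : ℝ)):𝕊))) :=
      (hφc.tendsto (B t)).comp (hB t)
    have h2 : Tendsto (fun n => φ (((G n t : ℝ)):𝕊)) (𝒰 : Filter ℕ) (𝓝 (ψ ((t:ℝ):𝕊))) := by
      rw [tendsto_iff_dist_tendsto_zero]
      have hsq : Tendsto (fun n => |φ (((G n t : ℝ)):𝕊) - ψ ((t:ℝ):𝕊)|) (𝒰 : Filter ℕ) (𝓝 0) := by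
        apply squeeze_zero' (Eventually.of_forall fun n => abs_nonneg _)
          (hyp'.mono fun n hn => by rw [abs_sub_comm]; exact hn.2.2.2.2.2.2.2.2 t) hεU
      simpa [Real.dist_eq] using hsq
    exact tendsto_nhds_unique h1 h2
  -- comparison lemmas
  have comp1 : ∀ s t : ℝ, A s < t → s ≤ B t := by
    intro s t hst
    have h1 : ∀ᶠ n in (𝒰 : Filter ℕ), F n s < t := (hA s).eventually_lt_const hst
    have h2 : ∀ᶠ n in (𝒰 : Filter ℕ), s ≤ G n t := by
      filter_upwards [h1, hyp'] with n h1n hn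
      have : F n s < F n (G n t) := by rw [hn.2.2.1 t]; exact h1n
      exact (hn.1.lt_iff_lt.mp this).le
    exact ge_of_tendsto (hB t) h2
  have comp2 : ∀ s t : ℝ, t < A s → B t ≤ s := by
    intro s t hst
    have h1 : ∀ᶠ n in (𝒰 : Filter ℕ), t < F n s := (hA s).eventually_const_lt hst
    have h2 : ∀ᶠ n in (𝒰 : Filter ℕ), G n t ≤ s := by
      filter_upwards [h1, hyp'] with n h1n hn
      have : F n (G n t) < F n s := by rw [hn.2.2.1 t]; exact h1n
      exact (hn.1.lt_iff_lt.mp this).le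
    exact le_of_tendsto (hB t) h2
  -- A strictly monotone
  have hAstrict : StrictMono A := by
    intro a b hab
    by_contra hno
    have hba : A b ≤ A a := not_lt.mp hno
    have heq : ∀ t ∈ Ioo a b, A t = A a := by
      intro t ht
      exact le_antisymm (le_trans (hAmono ht.2.le) hba) (hAmono ht.1.le)
    apply hφM a b (ψ (((A a : ℝ)):𝕊)) hab
    intro t ht
    rw [← hAψ t, heq t ht]
  -- A surjective
  have hAconst : ∀ m : ℤ, A ((m:ℝ)) = A 0 + m := by
    intro m
    have := hAint 0 m
    rwa [zero_add] at this
  have hAsurj : Function.Surjective A := by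
    intro y
    set S : Set ℝ := {s : ℝ | A s < y} with hS
    have hne : S.Nonempty := by
      refine ⟨((⌊y - A 0⌋ - 1 : ℤ) : ℝ), ?_⟩
      have h1 := hAconst (⌊y - A 0⌋ - 1)
      rw [Set.mem_setOf_eq, h1]
      push_cast
      linarith [Int.floor_le (y - A 0)]
    have hbdd : BddAbove S := by
      refine ⟨((⌈y - A 0⌉ + 1 : ℤ) : ℝ), ?_⟩
      intro s hs
      by_contra hcon
      push_neg at hcon
      have h1 : A (((⌈y - A 0⌉ + 1 : ℤ) : ℝ)) ≤ A s := hAmono hcon.le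
      rw [hAconst] at h1
      push_cast at h1
      have := Int.le_ceil (y - A 0)
      rw [Set.mem_setOf_eq] at hs
      linarith
    set t₀ := sSup S with ht₀
    have h1 : ∀ s, s < t₀ → A s < y := by
      intro s hs
      obtain ⟨s', hs'S, hss'⟩ := exists_lt_of_lt_csSup hne hs
      exact lt_of_le_of_lt (hAmono hss'.le) hs'S
    have h2 : ∀ s, t₀ < s → y ≤ A s := by
      intro s hs
      by_contra hcon
      push_neg at hcon
      exact absurd (le_csSup hbdd hcon) (not_le.mpr hs)
    rcases lt_trichotomy (A t₀) y with hlt | heqq | hgt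
    · exfalso
      apply hψM (A t₀) y (φ ((t₀:ℝ):𝕊)) hlt
      intro u hu
      have hBu : B u = t₀ := by
        refine le_antisymm ?_ (comp1 t₀ u hu.1)
        by_contra hc
        push_neg at hc
        have hs : t₀ < (t₀ + B u)/2 := by linarith
        have hs2 : (t₀ + B u)/2 < B u := by linarith
        have := comp2 ((t₀ + B u)/2) u (lt_of_lt_of_le hu.2 (h2 _ hs))
        linarith
      rw [← hBu, hBφ u]
    · exact ⟨t₀, heqq⟩
    · exfalso
      apply hψM y (A t₀) (φ ((t₀:ℝ):𝕊)) hgt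
      intro u hu
      have hBu : B u = t₀ := by
        refine le_antisymm (comp2 t₀ u hu.2) ?_
        by_contra hc
        push_neg at hc
        have hs : B u < (B u + t₀)/2 := by linarith
        have hs2 : (B u + t₀)/2 < t₀ := by linarith
        have := comp1 ((B u + t₀)/2) u (lt_trans (h1 _ hs2) hu.1)
        linarith
      rw [← hBu, hBφ u]
  -- build the homeomorphism
  set E := StrictMono.orderIsoOfSurjective A hAstrict hAsurj with hEdef
  have hEA : ∀ t, E t = A t := fun t => rfl
  have hEsymA : ∀ t, A (E.symm t) = t := by
    intro t
    have := E.apply_symm_apply t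
    rwa [hEA] at this
  have hEsymper : ∀ t, E.symm (t+1) = E.symm t + 1 := by
    intro t
    apply hAstrict.injective
    rw [hEsymA (t+1), hAper (E.symm t), hEsymA t]
  have hEsymint := OH.addint hEsymper
  have hAcont : Continuous A := by
    have : Continuous (⇑E) := E.toHomeomorph.continuous
    exact this
  have hEsymcont : Continuous (⇑E.symm) := E.toHomeomorph.symm.continuous
  have hcoe_cont : Continuous (fun t : ℝ => ((t:ℝ) : 𝕊)) := AddCircle.continuous_mk' 1
  have hmk : ∀ x : ℝ, (x : 𝕊) = Quotient.mk'' x := fun x => rfl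
  set fto : 𝕊 → 𝕊 := Quotient.map' A (fun x y h => OH.respects hAint h) with hfto
  set finv : 𝕊 → 𝕊 := Quotient.map' (⇑E.symm) (fun x y h => OH.respects hEsymint h) with hfinv
  have hfto_mk : ∀ t : ℝ, fto ((t:ℝ):𝕊) = ((A t : ℝ):𝕊) := fun t => rfl
  have hfinv_mk : ∀ t : ℝ, finv ((t:ℝ):𝕊) = ((E.symm t : ℝ):𝕊) := fun t => rfl
  have hleft : ∀ x : 𝕊, finv (fto x) = x := by
    intro x
    induction x using QuotientAddGroup.induction_on with
    | H t =>
      rw [hfto_mk t, hfinv_mk (A t)]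
      congr 1
      rw [← hEA t]
      exact E.symm_apply_apply t
  have hright : ∀ x : 𝕊, fto (finv x) = x := by
    intro x
    induction x using QuotientAddGroup.induction_on with
    | H t =>
      rw [hfinv_mk t, hfto_mk (E.symm t)]
      congr 1
      exact hEsymA t
  have hconto : Continuous fto := by
    rw [(QuotientAddGroup.isQuotientMap_mk (AddSubgroup.zmultiples (1:ℝ))).continuous_iff]
    have : (fto ∘ QuotientAddGroup.mk) = fun t : ℝ => ((A t : ℝ):𝕊) := by
      funext t
      exact hfto_mk t
    rw [this]
    exact hcoe_cont.comp hAcont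
  have hcontinv : Continuous finv := by
    rw [(QuotientAddGroup.isQuotientMap_mk (AddSubgroup.zmultiples (1:ℝ))).continuous_iff]
    have : (finv ∘ QuotientAddGroup.mk) = fun t : ℝ => ((E.symm t : ℝ):𝕊) := by
      funext t
      exact hfinv_mk t
    rw [this]
    exact hcoe_cont.comp hEsymcont
  refine ⟨⟨⟨fto, finv, hleft, hright⟩, hconto, hcontinv⟩, ?_⟩
  intro x
  induction x using QuotientAddGroup.induction_on with
  | H t =>
    show ψ (fto ((t:ℝ):𝕊)) = φ ((t:ℝ):𝕊)
    rw [hfto_mk t, hAψ t]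

end OptHomeoAux

open Set in
/-- **Main theorem (Theorem `mainthm`).** If `φ, ψ : ℝ/ℤ → ℝ` are Morse measuring
functions on the circle and the natural pseudo-distance between `(ℝ/ℤ, φ)` and
`(ℝ/ℤ, ψ)` vanishes, then an optimal homeomorphism exists, i.e. a homeomorphism
`f` with `ψ (f x) = φ x` for all `x`. -/
theorem optimal_homeomorphism_of_pseudoDist_eq_zero
    (φ ψ : AddCircle (1 : ℝ) → ℝ)
    (hφC : ContDiff ℝ 2 (fun t : ℝ => φ (t : AddCircle (1 : ℝ))))
    (hφMorse : ∀ t : ℝ, deriv (fun s : ℝ => φ (s : AddCircle (1 : ℝ))) t ≠ 0 ∨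
      deriv (deriv (fun s : ℝ => φ (s : AddCircle (1 : ℝ)))) t ≠ 0)
    (hψC : ContDiff ℝ 2 (fun t : ℝ => ψ (t : AddCircle (1 : ℝ))))
    (hψMorse : ∀ t : ℝ, deriv (fun s : ℝ => ψ (s : AddCircle (1 : ℝ))) t ≠ 0 ∨
      deriv (deriv (fun s : ℝ => ψ (s : AddCircle (1 : ℝ)))) t ≠ 0)
    (hdist : (⨅ f : AddCircle (1 : ℝ) ≃ₜ AddCircle (1 : ℝ), ⨆ x, |φ x - ψ (f x)|) = 0) :
    ∃ f : AddCircle (1 : ℝ) ≃ₜ AddCircle (1 : ℝ), ∀ x, ψ (f x) = φ x := by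
  classical
  haveI : Nonempty (AddCircle (1:ℝ) ≃ₜ AddCircle (1:ℝ)) := ⟨Homeomorph.refl _⟩
  have hquot := QuotientAddGroup.isQuotientMap_mk (AddSubgroup.zmultiples (1:ℝ))
  have hφcont : Continuous φ := hquot.continuous_iff.mpr hφC.continuous
  have hψcont : Continuous ψ := hquot.continuous_iff.mpr hψC.continuous
  have hφM : ∀ (a b c : ℝ), a < b → ¬ (∀ t ∈ Ioo a b, φ ((t : ℝ) : AddCircle (1:ℝ)) = c) :=
    fun a b c hab h => OH.not_const hφMorse hab h
  have hψM : ∀ (a b c : ℝ), a < b → ¬ (∀ t ∈ Ioo a b, ψ ((t : ℝ) : AddCircle (1:ℝ)) = c) :=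
    fun a b c hab h => OH.not_const hψMorse hab h
  have hex : ∀ n : ℕ, ∃ f : AddCircle (1:ℝ) ≃ₜ AddCircle (1:ℝ),
      ∀ x, |φ x - ψ (f x)| < 1/((n:ℝ)+1) := by
    intro n
    have hpos : (0:ℝ) < 1/((n:ℝ)+1) := by positivity
    have hlt : (⨅ f : AddCircle (1:ℝ) ≃ₜ AddCircle (1:ℝ), ⨆ x, |φ x - ψ (f x)|) < 1/((n:ℝ)+1) := by
      rw [hdist]; exact hpos
    obtain ⟨f, hf⟩ := exists_lt_of_ciInf_lt hlt
    refine ⟨f, fun x => lt_of_le_of_lt (le_ciSup (f := fun x => |φ x - ψ (f x)|) ?_ x) hf⟩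
    have hcont : Continuous fun x => |φ x - ψ (f x)| :=
      (hφcont.sub (hψcont.comp f.continuous)).abs
    exact (isCompact_range hcont).bddAbove
  choose fs hfs using hex
  choose Fs Gs hFmono hFper hFG hF0 hFcoe using fun n => OH.lift_exists (fs n)
  set 𝒰 : Ultrafilter ℕ := Ultrafilter.of atTop with h𝒰def
  have h𝒰 : (𝒰 : Filter ℕ) ≤ atTop := Ultrafilter.of_le atTop
  have hεt : Tendsto (fun n : ℕ => 1/((n:ℝ)+1)) atTop (𝓝 0) :=
    tendsto_one_div_add_atTop_nhds_zero_nat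
  set S : Set ℕ := {n | ∀ t : ℝ, ((Fs n t : ℝ) : AddCircle (1:ℝ)) = fs n ((t:ℝ) : AddCircle (1:ℝ))}
    with hSdef
  rcases Ultrafilter.mem_or_compl_mem 𝒰 S with hS | hS
  · -- orientation preserving case
    apply OH.key φ ψ hφC.continuous hψC.continuous hφM hψM 𝒰 h𝒰 Fs Gs
      (fun n : ℕ => 1/((n:ℝ)+1)) hεt
    have hSev : ∀ᶠ n in (𝒰 : Filter ℕ), n ∈ S := hS
    filter_upwards [hSev] with n hn
    refine ⟨hFmono n, hFper n, hFG n, hF0 n, fun t => ?_⟩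
    rw [hn t]
    exact (hfs n _).le
  · -- orientation reversing case
    set ψ' : AddCircle (1:ℝ) → ℝ := fun x => ψ (-x) with hψ'def
    have hψ'c : Continuous (fun t : ℝ => ψ' ((t:ℝ) : AddCircle (1:ℝ))) := by
      have he : (fun t : ℝ => ψ' ((t:ℝ) : AddCircle (1:ℝ)))
          = (fun s : ℝ => ψ ((s:ℝ) : AddCircle (1:ℝ))) ∘ (fun t : ℝ => -t) := by
        funext t
        show ψ (-((t:ℝ) : AddCircle (1:ℝ))) = ψ (((-t : ℝ)) : AddCircle (1:ℝ))
        rw [OH.coe_neg]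
      rw [he]
      exact hψC.continuous.comp continuous_neg
    have hψ'M : ∀ (a b c : ℝ), a < b → ¬ (∀ t ∈ Ioo a b, ψ' ((t : ℝ) : AddCircle (1:ℝ)) = c) := by
      intro a b c hab h
      apply hψM (-b) (-a) c (by linarith)
      intro u hu
      have h1 : ψ' (((-u : ℝ)) : AddCircle (1:ℝ)) = c := h (-u) ⟨by linarith [hu.2], by linarith [hu.1]⟩
      have h2 : ψ' (((-u : ℝ)) : AddCircle (1:ℝ)) = ψ ((u:ℝ) : AddCircle (1:ℝ)) := by
        show ψ (-(((-u : ℝ)) : AddCircle (1:ℝ))) = ψ ((u:ℝ) : AddCircle (1:ℝ))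
        rw [OH.coe_neg, neg_neg]
      rw [← h2, h1]
    have hkey := OH.key φ ψ' hφC.continuous hψ'c hφM hψ'M 𝒰 h𝒰 Fs Gs
      (fun n : ℕ => 1/((n:ℝ)+1)) hεt ?_
    · obtain ⟨h, hh⟩ := hkey
      refine ⟨h.trans (Homeomorph.neg (AddCircle (1:ℝ))), fun x => ?_⟩
      show ψ (-(h x)) = φ x
      exact hh x
    · have hSev : ∀ᶠ n in (𝒰 : Filter ℕ), n ∈ Sᶜ := hS
      filter_upwards [hSev] with n hn
      have hsecond : ∀ t : ℝ, ((Fs n t : ℝ) : AddCircle (1:ℝ)) = - fs n ((t:ℝ) : AddCircle (1:ℝ)) :=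
        (hFcoe n).resolve_left hn
      refine ⟨hFmono n, hFper n, hFG n, hF0 n, fun t => ?_⟩
      have : ψ' ((Fs n t : ℝ) : AddCircle (1:ℝ)) = ψ (fs n ((t:ℝ) : AddCircle (1:ℝ))) := by
        show ψ (-(((Fs n t : ℝ)) : AddCircle (1:ℝ))) = ψ (fs n ((t:ℝ) : AddCircle (1:ℝ)))
        rw [hsecond t, neg_neg]
      rw [this]
      exact (hfs n _).le
end

section
/- Let φ, ψ : ℝ/ℤ → ℝ be Morse measuring functions on the circle. Let (f_k) be a sequence of orientation-preserving homeomorphisms of ℝ/ℤ with sup_{x ∈ ℝ/ℤ} |φ(x) − ψ(f_k(x))| → 0 as k → ∞. Let D = π(ℚ) (a countable dense subset of ℝ/ℤ) and suppose g, h : D → ℝ/ℤ are functions such that for every d ∈ D, f_k(d) → g(d) and f_k⁻¹(d) → h(d) as k → ∞. Define the relation ρ = {(d, g(d)) : d ∈ D} ∪ {(h(d), d) : d ∈ D} ⊆ (ℝ/ℤ) × (ℝ/ℤ). Then for every ε > 0 there exists η > 0 such that for all (x, y), (x′, y′) ∈ ρ: if dist(x, x′) < η then dist(y, y′) < ε,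 and if dist(y, y′) < η then dist(x, x′) < ε. -/
open Filter Topology

noncomputable section
namespace RhoAux

local notation "𝕊" => AddCircle (1:ℝ)

lemma coe_int_zero (m : ℤ) : (((m : ℝ)) : 𝕊) = 0 := by
  have h : ((m : ℝ)) = m • (1 : ℝ) := by simp
  rw [h, QuotientAddGroup.mk_zsmul, AddCircle.coe_period, smul_zero]

lemma coe_add' (a b : ℝ) : ((a + b : ℝ) : 𝕊) = (a : 𝕊) + (b : 𝕊) := rfl
lemma coe_sub' (a b : ℝ) : ((a - b : ℝ) : 𝕊) = (a : 𝕊) - (b : 𝕊) := rfl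

lemma norm_coe_le (r : ℝ) : ‖(r : 𝕊)‖ ≤ |r| := QuotientAddGroup.norm_mk_le_norm

lemma dist_coe_le (s t : ℝ) : dist (s : 𝕊) (t : 𝕊) ≤ |s - t| := by
  rw [dist_eq_norm, ← coe_sub']; exact norm_coe_le _

lemma coe_int_add (r : ℝ) (m : ℤ) : ((r + m : ℝ) : 𝕊) = (r : 𝕊) := by
  rw [coe_add', coe_int_zero, add_zero]

lemma exists_reps (u u' : 𝕊) : ∃ s s' : ℝ, (s : 𝕊) = u ∧ (s' : 𝕊) = u' ∧ |s - s'| = dist u u' := by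
  obtain ⟨s, rfl⟩ := QuotientAddGroup.mk_surjective u
  obtain ⟨t, rfl⟩ := QuotientAddGroup.mk_surjective u'
  refine ⟨s, t + round (s - t), rfl, ?_, ?_⟩
  · rw [coe_add']
    rw [show ((round (s-t) : ℝ) : 𝕊) = 0 from coe_int_zero _, add_zero]
  · rw [dist_eq_norm, ← coe_sub', AddCircle.norm_eq]
    simp only [inv_one, one_mul, mul_one]
    have : s - (t + (round (s - t) : ℤ)) = (s - t) - round (s - t) := by ring
    rw [this]

lemma cont_of_lift {φ : 𝕊 → ℝ} (h : Continuous fun t : ℝ => φ (t : 𝕊)) : Continuous φ :=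
  (QuotientAddGroup.isOpenQuotientMap_mk.isQuotientMap.continuous_iff).mpr h

lemma main_equicont (φ ψ : 𝕊 → ℝ) (hφc : Continuous φ) (hψc : Continuous ψ)
    (hψMorse : ∀ t : ℝ, deriv (fun s : ℝ => ψ (s : 𝕊)) t ≠ 0 ∨
      deriv (deriv (fun s : ℝ => ψ (s : 𝕊))) t ≠ 0)
    (f : ℕ → 𝕊 ≃ₜ 𝕊)
    (hor : ∀ k : ℕ, ∃ F : ℝ → ℝ, Continuous F ∧ StrictMono F ∧
      (∀ t : ℝ, F (t + 1) = F t + 1) ∧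
      ∀ t : ℝ, f k (t : 𝕊) = ((F t : ℝ) : 𝕊))
    (happrox : Tendsto (fun k => ⨆ x, |φ x - ψ (f k x)|) atTop (𝓝 0))
    {ε : ℝ} (hε : 0 < ε) :
    ∃ η > (0:ℝ), ∃ K : ℕ, ∀ k ≥ K, ∀ u u' : 𝕊, dist u u' < η → dist (f k u) (f k u') < ε := by
  haveI : Fact ((0:ℝ) < 1) := ⟨one_pos⟩
  set Ψ : ℝ → ℝ := fun s : ℝ => ψ (s : 𝕊) with hΨ
  set S : ℕ → ℝ := fun k => ⨆ x, |φ x - ψ (f k x)| with hSdef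
  have hS : ∀ k : ℕ, ∀ x : 𝕊, |φ x - ψ (f k x)| ≤ S k := by
    intro k x
    apply le_ciSup (f := fun x => |φ x - ψ (f k x)|)
    have hcont : Continuous fun x => |φ x - ψ (f k x)| :=
      (hφc.sub (hψc.comp (f k).continuous)).abs
    rw [← Set.image_univ]
    exact IsCompact.bddAbove_image isCompact_univ hcont.continuousOn
  by_contra hcon
  push_neg at hcon
  -- hcon : ∀ η > 0, ∀ K, ∃ k ≥ K, ∃ u u', dist u u' < η ∧ ε ≤ dist (f k u) (f k u')
  have hsel : ∀ n : ℕ, ∃ k ≥ n, ∃ u u' : 𝕊,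
      dist u u' < 1 / (n + 1) ∧ ε ≤ dist (f k u) (f k u') := by
    intro n
    obtain ⟨k, hk, u, u', h1, h2⟩ := hcon (1 / (n + 1)) (by positivity) n
    exact ⟨k, hk, u, u', h1, h2⟩
  choose k hk u u' hdu hdfu using hsel
  -- reps
  have hreps : ∀ n, ∃ a b : ℝ, a ≤ b ∧ b - a = dist (u n) (u' n) ∧
      ε ≤ dist (f (k n) ((a:ℝ) : 𝕊)) (f (k n) ((b:ℝ) : 𝕊)) := by
    intro n
    obtain ⟨s, s', hs, hs', habs⟩ := exists_reps (u n) (u' n)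
    rcases le_total s s' with hle | hle
    · refine ⟨s, s', hle, ?_, ?_⟩
      · rw [abs_of_nonpos (by linarith)] at habs; linarith
      · rw [hs, hs']; exact hdfu n
    · refine ⟨s', s, hle, ?_, ?_⟩
      · rw [abs_of_nonneg (by linarith)] at habs; linarith
      · rw [hs, hs', dist_comm]; exact hdfu n
  choose a b hab hba hfab using hreps
  choose F hFc hFm hFp hFl using fun n => hor (k n)
  -- ε ≤ F n (b n) - F n (a n)
  have hFgap : ∀ n, ε ≤ F n (b n) - F n (a n) := by
    intro n
    have h1 : ε ≤ dist (((F n (a n) : ℝ)) : 𝕊) (((F n (b n) : ℝ)) : 𝕊) := by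
      rw [← hFl n (a n), ← hFl n (b n)]; exact hfab n
    have h2 : dist (((F n (a n) : ℝ)) : 𝕊) (((F n (b n) : ℝ)) : 𝕊) ≤ |F n (a n) - F n (b n)| :=
      dist_coe_le _ _
    have h3 : F n (a n) ≤ F n (b n) := (hFm n).monotone (hab n)
    rw [abs_of_nonpos (by linarith)] at h2
    linarith
  set c : ℕ → ℝ := fun n => Int.fract (F n (a n)) with hcdef
  -- key approximation on the interval [c n, c n + ε]
  have hkey : ∀ n, ∀ r ∈ Set.Icc (c n) (c n + ε), ∃ σ ∈ Set.Icc (a n) (b n),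
      |Ψ r - φ ((σ : ℝ) : 𝕊)| ≤ S (k n) := by
    intro n r hr
    have hmem : r + ⌊F n (a n)⌋ ∈ Set.Icc (F n (a n)) (F n (b n)) := by
      have h1 : c n = F n (a n) - ⌊F n (a n)⌋ := (Int.self_sub_floor _).symm
      constructor
      · have := hr.1; rw [h1] at this; linarith
      · have := hr.2; rw [h1] at this; have := hFgap n; linarith
    obtain ⟨σ, hσmem, hσ⟩ := intermediate_value_Icc (hab n) (hFc n).continuousOn hmem
    refine ⟨σ, hσmem, ?_⟩
    have h2 : Ψ r = ψ (f (k n) ((σ : ℝ) : 𝕊)) := by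
      rw [hFl n σ, hσ]
      show ψ ((r : ℝ) : 𝕊) = ψ (((r + (⌊F n (a n)⌋ : ℝ)) : ℝ) : 𝕊)
      rw [coe_int_add]
    rw [h2, abs_sub_comm]
    exact hS (k n) _
  -- extract a convergent subsequence of c
  have hcmem : ∀ n, c n ∈ Set.Icc (0:ℝ) 1 :=
    fun n => ⟨Int.fract_nonneg _, (Int.fract_lt_one _).le⟩
  obtain ⟨cs, hcs, sub, hsubmono, hsubtend⟩ := isCompact_Icc.tendsto_subseq hcmem
  -- uniform continuity of φ
  have hφu : UniformContinuous φ := CompactSpace.uniformContinuous_of_continuous hφc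
  -- tendsto of S ∘ k ∘ sub
  have hktend : Tendsto (fun j => k (sub j)) atTop atTop :=
    tendsto_atTop_mono (fun j => le_trans (hsubmono.id_le j) (hk (sub j)))
      (tendsto_id (α := ℕ))
  have hStend : Tendsto (fun j => S (k (sub j))) atTop (𝓝 0) := happrox.comp hktend
  -- constancy of Ψ on Ioo cs (cs + ε)
  have hconst : ∀ σ ∈ Set.Ioo cs (cs + ε), ∀ τ ∈ Set.Ioo cs (cs + ε), Ψ σ = Ψ τ := by
    intro σ hσ τ hτ
    have key : ∀ θ : ℝ, 0 < θ → |Ψ σ - Ψ τ| ≤ 4 * θ := by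
      intro θ hθ
      obtain ⟨γ, hγ, hγ2⟩ := Metric.uniformContinuous_iff.mp hφu θ hθ
      -- eventually conditions
      have e1 : ∀ᶠ j in atTop, c (sub j) < min σ τ :=
        hsubtend.eventually_lt_const (lt_min hσ.1 hτ.1)
      have e2 : ∀ᶠ j in atTop, max σ τ - ε < c (sub j) :=
        hsubtend.eventually_const_lt (by rcases max_cases σ τ with ⟨h,_⟩|⟨h,_⟩ <;> rw [h] <;>
          [linarith [hσ.2]; linarith [hτ.2]])
      have e3 : ∀ᶠ j in atTop, S (k (sub j)) < θ :=
        hStend.eventually_lt_const hθ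
      have e4 : ∀ᶠ j in atTop, (1 : ℝ) / (sub j + 1) < γ := by
        have : Tendsto (fun j => (1:ℝ) / (sub j + 1)) atTop (𝓝 0) := by
          apply tendsto_one_div_add_atTop_nhds_zero_nat.comp hsubmono.tendsto_atTop
        exact this.eventually_lt_const hγ
      obtain ⟨j, h1, h2, h3, h4⟩ := (e1.and (e2.and (e3.and e4))).exists
      set n := sub j
      have hσI : σ ∈ Set.Icc (c n) (c n + ε) :=
        ⟨le_of_lt (lt_of_lt_of_le h1 (min_le_left _ _)),
         by have := le_max_left σ τ; linarith⟩
      have hτI : τ ∈ Set.Icc (c n) (c n + ε) :=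
        ⟨le_of_lt (lt_of_lt_of_le h1 (min_le_right _ _)),
         by have := le_max_right σ τ; linarith⟩
      obtain ⟨σ₁, hσ₁mem, hσ₁⟩ := hkey n σ hσI
      obtain ⟨τ₁, hτ₁mem, hτ₁⟩ := hkey n τ hτI
      have hdistσ : dist ((σ₁ : ℝ) : 𝕊) ((τ₁ : ℝ) : 𝕊) < γ := by
        have hb1 : |σ₁ - τ₁| ≤ b n - a n := by
          rw [abs_le]
          refine ⟨?_, ?_⟩
          · linarith [hσ₁mem.1, hσ₁mem.2, hτ₁mem.1, hτ₁mem.2]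
          · linarith [hσ₁mem.1, hσ₁mem.2, hτ₁mem.1, hτ₁mem.2]
        calc dist ((σ₁ : ℝ) : 𝕊) ((τ₁ : ℝ) : 𝕊) ≤ |σ₁ - τ₁| := dist_coe_le _ _
          _ ≤ b n - a n := hb1
          _ = dist (u n) (u' n) := hba n
          _ < 1 / (n + 1) := hdu n
          _ < γ := h4
      have hφστ : |φ ((σ₁ : ℝ) : 𝕊) - φ ((τ₁ : ℝ) : 𝕊)| < θ := by
        have := hγ2 hdistσ
        rwa [Real.dist_eq] at this
      have tri1 := abs_sub_le (Ψ σ) (φ ((σ₁ : ℝ) : 𝕊)) (Ψ τ)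
      have tri2 := abs_sub_le (φ ((σ₁ : ℝ) : 𝕊)) (φ ((τ₁ : ℝ) : 𝕊)) (Ψ τ)
      have h5 : |φ ((τ₁ : ℝ) : 𝕊) - Ψ τ| = |Ψ τ - φ ((τ₁ : ℝ) : 𝕊)| := abs_sub_comm _ _
      linarith [hσ₁, hτ₁, h3, hφστ]
    have h0 : |Ψ σ - Ψ τ| ≤ 0 := by
      by_contra hpos
      push_neg at hpos
      linarith [key (|Ψ σ - Ψ τ| / 8) (by linarith)]
    exact sub_eq_zero.mp (abs_eq_zero.mp (le_antisymm h0 (abs_nonneg _)))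
  -- derive contradiction with Morse at midpoint
  set m := cs + ε / 2 with hmdef
  have hmmem : m ∈ Set.Ioo cs (cs + ε) := ⟨by simp [hmdef]; linarith, by simp [hmdef]; linarith⟩
  have hderiv : ∀ x ∈ Set.Ioo cs (cs + ε), deriv Ψ x = 0 := by
    intro x hx
    have hev : Ψ =ᶠ[𝓝 x] fun _ => Ψ m := by
      filter_upwards [isOpen_Ioo.mem_nhds hx] with y hy
      exact hconst y hy m hmmem
    rw [hev.deriv_eq, deriv_const]
  have hd1 : deriv Ψ m = 0 := hderiv m hmmem
  have hd2 : deriv (deriv Ψ) m = 0 := by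
    have hev : deriv Ψ =ᶠ[𝓝 m] fun _ => (0:ℝ) := by
      filter_upwards [isOpen_Ioo.mem_nhds hmmem] with y hy
      exact hderiv y hy
    rw [hev.deriv_eq, deriv_const]
  rcases hψMorse m with h | h
  · exact h hd1
  · exact h hd2

lemma lift_symm (f : 𝕊 ≃ₜ 𝕊) (F : ℝ → ℝ) (hc : Continuous F) (hm : StrictMono F)
    (hp : ∀ t, F (t + 1) = F t + 1) (hl : ∀ t : ℝ, f (t : 𝕊) = ((F t : ℝ) : 𝕊)) :
    ∃ G : ℝ → ℝ, Continuous G ∧ StrictMono G ∧ (∀ t, G (t + 1) = G t + 1) ∧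
      ∀ t : ℝ, f.symm (t : 𝕊) = ((G t : ℝ) : 𝕊) := by
  have hint : ∀ (t : ℝ) (n : ℕ), F (t + n) = F t + n := by
    intro t n
    induction n with
    | zero => simp
    | succ n ih =>
      have : t + (n + 1 : ℕ) = (t + n) + 1 := by push_cast; ring
      rw [this, hp, ih]; push_cast; ring
  have hsurj : Function.Surjective F := by
    intro y
    obtain ⟨n, hn⟩ : ∃ n : ℕ, |y - F 0| ≤ n := exists_nat_ge _
    have habs := abs_le.mp hn
    have h1 : F (-(n : ℝ)) ≤ y := by
      have h0 : F ((-(n : ℝ)) + n) = F (-(n : ℝ)) + n := hint _ n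
      simp at h0
      linarith
    have h2 : y ≤ F ((n : ℝ)) := by
      have h0 : F ((0 : ℝ) + n) = F 0 + n := hint 0 n
      simp at h0
      linarith
    have hle : (-(n : ℝ)) ≤ (n : ℝ) := by
      have : (0:ℝ) ≤ n := Nat.cast_nonneg n
      linarith
    obtain ⟨x, _, hx⟩ := intermediate_value_Icc hle hc.continuousOn ⟨h1, h2⟩
    exact ⟨x, hx⟩
  let E : ℝ ≃o ℝ := StrictMono.orderIsoOfSurjective F hm hsurj
  have hE : ∀ x, E x = F x := fun _ => rfl
  have hFG : ∀ x, F (E.symm x) = x := fun x => by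
    rw [← hE]; exact E.apply_symm_apply x
  refine ⟨fun t => E.symm t, E.symm.continuous, E.symm.strictMono, ?_, ?_⟩
  · intro t
    apply hm.injective
    rw [hFG, hp, hFG]
  · intro t
    apply f.injective
    rw [Homeomorph.apply_symm_apply, hl, hFG]


end RhoAux

open RhoAux

local notation "𝕊" => AddCircle (1:ℝ)

/-- Lemma `LemmaFond (i)`: uniform-continuity-type property of the relation `ρ`
built from the pointwise limits, on the rational points, of a 0-approximating
sequence of orientation-preserving homeomorphisms of the circle. -/
theorem rho_uniform_continuity
    (φ ψ : AddCircle (1 : ℝ) → ℝ)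
    (hφC : ContDiff ℝ 2 (fun t : ℝ => φ (t : AddCircle (1 : ℝ))))
    (hφMorse : ∀ t : ℝ, deriv (fun s : ℝ => φ (s : AddCircle (1 : ℝ))) t ≠ 0 ∨
      deriv (deriv (fun s : ℝ => φ (s : AddCircle (1 : ℝ)))) t ≠ 0)
    (hψC : ContDiff ℝ 2 (fun t : ℝ => ψ (t : AddCircle (1 : ℝ))))
    (hψMorse : ∀ t : ℝ, deriv (fun s : ℝ => ψ (s : AddCircle (1 : ℝ))) t ≠ 0 ∨
      deriv (deriv (fun s : ℝ => ψ (s : AddCircle (1 : ℝ)))) t ≠ 0)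
    (f : ℕ → AddCircle (1 : ℝ) ≃ₜ AddCircle (1 : ℝ))
    (hor : ∀ k : ℕ, ∃ F : ℝ → ℝ, Continuous F ∧ StrictMono F ∧
      (∀ t : ℝ, F (t + 1) = F t + 1) ∧
      ∀ t : ℝ, f k (t : AddCircle (1 : ℝ)) = ((F t : ℝ) : AddCircle (1 : ℝ)))
    (happrox : Tendsto (fun k => ⨆ x, |φ x - ψ (f k x)|) atTop (𝓝 0))
    (D : Set (AddCircle (1 : ℝ)))
    (hD : D = Set.range (fun q : ℚ => ((q : ℝ) : AddCircle (1 : ℝ))))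
    (g h : AddCircle (1 : ℝ) → AddCircle (1 : ℝ))
    (hg : ∀ d ∈ D, Tendsto (fun k => f k d) atTop (𝓝 (g d)))
    (hh : ∀ d ∈ D, Tendsto (fun k => (f k).symm d) atTop (𝓝 (h d)))
    (ρ : Set (AddCircle (1 : ℝ) × AddCircle (1 : ℝ)))
    (hρ : ρ = {p | (p.1 ∈ D ∧ p.2 = g p.1) ∨ (p.2 ∈ D ∧ p.1 = h p.2)}) :
    ∀ ε > (0 : ℝ), ∃ η > (0 : ℝ), ∀ p ∈ ρ, ∀ p' ∈ ρ,
      (dist p.1 p'.1 < η → dist p.2 p'.2 < ε) ∧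
      (dist p.2 p'.2 < η → dist p.1 p'.1 < ε) := by
  intro ε hε
  haveI : Fact ((0:ℝ) < 1) := ⟨one_pos⟩
  have hφc : Continuous φ := cont_of_lift hφC.continuous
  have hψc : Continuous ψ := cont_of_lift hψC.continuous
  obtain ⟨η₁, hη₁, K₁, hK₁⟩ := main_equicont φ ψ hφc hψc hψMorse f hor happrox (half_pos hε)
  have hor' : ∀ k : ℕ, ∃ G : ℝ → ℝ, Continuous G ∧ StrictMono G ∧
      (∀ t : ℝ, G (t + 1) = G t + 1) ∧
      ∀ t : ℝ, (f k).symm (t : 𝕊) = ((G t : ℝ) : 𝕊) := by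
    intro k
    obtain ⟨F, h1, h2, h3, h4⟩ := hor k
    exact lift_symm (f k) F h1 h2 h3 h4
  have happrox' : Tendsto (fun k => ⨆ x, |ψ x - φ ((f k).symm x)|) atTop (𝓝 0) := by
    have heq : (fun k => ⨆ x, |ψ x - φ ((f k).symm x)|)
        = fun k => ⨆ x, |φ x - ψ (f k x)| := by
      funext kk
      rw [← Function.Surjective.iSup_comp (g := fun x => |ψ x - φ ((f kk).symm x)|)
        (f kk).surjective]
      apply iSup_congr
      intro y
      rw [Homeomorph.symm_apply_apply, abs_sub_comm]
    rw [heq]; exact happrox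
  obtain ⟨η₂, hη₂, K₂, hK₂⟩ := main_equicont ψ φ hψc hφc hφMorse (fun k => (f k).symm)
    hor' happrox' (half_pos hε)
  refine ⟨min η₁ η₂, lt_min hη₁ hη₂, ?_⟩
  have fwd : ∀ p ∈ ρ, ∃ aa : ℕ → 𝕊, Tendsto aa atTop (𝓝 p.1) ∧
      Tendsto (fun k => f k (aa k)) atTop (𝓝 p.2) := by
    intro p hp
    rw [hρ] at hp
    rcases hp with ⟨hd, hgd⟩ | ⟨hd, hhd⟩
    · exact ⟨fun _ => p.1, tendsto_const_nhds, hgd ▸ hg p.1 hd⟩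
    · refine ⟨fun k => (f k).symm p.2, hhd ▸ hh p.2 hd, ?_⟩
      have heq : (fun k => f k ((f k).symm p.2)) = fun _ => p.2 :=
        funext fun k => (f k).apply_symm_apply _
      rw [heq]; exact tendsto_const_nhds
  have bwd : ∀ p ∈ ρ, ∃ bb : ℕ → 𝕊, Tendsto bb atTop (𝓝 p.2) ∧
      Tendsto (fun k => (f k).symm (bb k)) atTop (𝓝 p.1) := by
    intro p hp
    rw [hρ] at hp
    rcases hp with ⟨hd, hgd⟩ | ⟨hd, hhd⟩
    · refine ⟨fun k => f k p.1, hgd ▸ hg p.1 hd, ?_⟩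
      have heq : (fun k => (f k).symm (f k p.1)) = fun _ => p.1 :=
        funext fun k => (f k).symm_apply_apply _
      rw [heq]; exact tendsto_const_nhds
    · exact ⟨fun _ => p.2, tendsto_const_nhds, hhd ▸ hh p.2 hd⟩
  intro p hp p' hp'
  obtain ⟨aa, ha1, ha2⟩ := fwd p hp
  obtain ⟨aa', ha1', ha2'⟩ := fwd p' hp'
  obtain ⟨bb, hb1, hb2⟩ := bwd p hp
  obtain ⟨bb', hb1', hb2'⟩ := bwd p' hp'
  constructor
  · intro hlt
    have hlt1 : dist p.1 p'.1 < η₁ := lt_of_lt_of_le hlt (min_le_left _ _)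
    have hev : ∀ᶠ kk in atTop, dist (f kk (aa kk)) (f kk (aa' kk)) ≤ ε / 2 := by
      have hda : Tendsto (fun kk => dist (aa kk) (aa' kk)) atTop (𝓝 (dist p.1 p'.1)) :=
        ha1.dist ha1'
      filter_upwards [hda.eventually_lt_const hlt1, eventually_ge_atTop K₁] with kk h1 h2
      exact le_of_lt (hK₁ kk h2 _ _ h1)
    have hfin : dist p.2 p'.2 ≤ ε / 2 := le_of_tendsto (ha2.dist ha2') hev
    linarith
  · intro hlt
    have hlt2 : dist p.2 p'.2 < η₂ := lt_of_lt_of_le hlt (min_le_right _ _)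
    have hev : ∀ᶠ kk in atTop, dist ((f kk).symm (bb kk)) ((f kk).symm (bb' kk)) ≤ ε / 2 := by
      have hdb : Tendsto (fun kk => dist (bb kk) (bb' kk)) atTop (𝓝 (dist p.2 p'.2)) :=
        hb1.dist hb1'
      filter_upwards [hdb.eventually_lt_const hlt2, eventually_ge_atTop K₂] with kk h1 h2
      exact le_of_lt (hK₂ kk h2 _ _ h1)
    have hfin : dist p.1 p'.1 ≤ ε / 2 := le_of_tendsto (hb2.dist hb2') hev
    linarith

end
end

section
/- Let φ, ψ : ℝ/ℤ → ℝ be Morse measuring functions on the circle. Let (f_k) be a sequence of orientation-preserving homeomorphisms of ℝ/ℤ with sup_{x ∈ ℝ/ℤ} |φ(x) − ψ(f_k(x))| → 0 as k → ∞. Let D = π(ℚ) and suppose g, h : D → ℝ/ℤ are functions such that for every d ∈ D, f_k(d) → g(d) and f_k⁻¹(d) → h(d) as k → ∞. Define ρ = {(d, g(d)) : d ∈ D} ∪ {(h(d), d) : d ∈ D} ⊆ (ℝ/ℤ) × (ℝ/ℤ). Then for all (x, y), (x′, y′) ∈ ρ, one has x = x′ if and only if y = y′. -/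
open Filter Topology

private lemma rhoinj_dist_le (u v : ℝ) :
    dist ((u : AddCircle (1:ℝ))) ((v : AddCircle (1:ℝ))) ≤ |u - v| := by
  rw [dist_eq_norm]
  have : ((u : AddCircle (1:ℝ))) - (v : AddCircle (1:ℝ)) = ((u - v : ℝ) : AddCircle (1:ℝ)) := by
    rw [← QuotientAddGroup.mk_sub]
  rw [this, AddCircle.norm_eq]
  simpa using round_le (u - v) 0

private lemma rhoinj_norm_min {c : ℝ} (h0 : 0 ≤ c) (h1 : c ≤ 1) :
    ‖((c : ℝ) : AddCircle (1:ℝ))‖ = min c (1 - c) := by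
  rw [AddCircle.norm_eq]
  simp only [inv_one, one_mul, mul_one]
  rw [abs_sub_round_eq_min]
  rcases eq_or_lt_of_le h1 with rfl | hlt
  · norm_num [Int.fract_one]
  · rw [Int.fract_eq_self.mpr ⟨h0, hlt⟩]

private lemma rhoinj_exists_lift (z : AddCircle (1:ℝ)) :
    ∃ w : ℝ, ((w : ℝ) : AddCircle (1:ℝ)) = z ∧ |w| = ‖z‖ := by
  obtain ⟨u, rfl⟩ := QuotientAddGroup.mk_surjective z
  refine ⟨u - round u, ?_, ?_⟩
  · have : ((round u : ℝ) : AddCircle (1:ℝ)) = 0 := by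
      rw [QuotientAddGroup.eq_zero_iff]
      exact AddSubgroup.intCast_mem_zmultiples_one _
    rw [QuotientAddGroup.mk_sub, this, sub_zero]
  · rw [AddCircle.norm_eq]; simp

private lemma rhoinj_collapse
    (α β : AddCircle (1:ℝ) → ℝ)
    (hαM : ∀ t : ℝ, deriv (fun s : ℝ => α (s : AddCircle (1:ℝ))) t ≠ 0 ∨
      deriv (deriv (fun s : ℝ => α (s : AddCircle (1:ℝ)))) t ≠ 0)
    (hβ : Continuous β)
    (a b : ℝ) (hab : a < b)
    (H : ∀ ε > 0, ∃ E : ℝ → ℝ, Monotone E ∧ 0 ≤ E b - E a ∧ E b - E a < ε ∧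
      ∀ t ∈ Set.Icc a b, |α (t : AddCircle (1:ℝ)) - β ((E t : ℝ) : AddCircle (1:ℝ))| < ε) :
    False := by
  set A : ℝ → ℝ := fun t => α (t : AddCircle (1:ℝ)) with hA
  have hβu : UniformContinuous β := CompactSpace.uniformContinuous_of_continuous hβ
  -- A is constant on [a,b]
  have hconst : ∀ t ∈ Set.Icc a b, ∀ t' ∈ Set.Icc a b, A t = A t' := by
    intro t ht t' ht'
    by_contra hne
    have habs : 0 < |A t - A t'| := abs_pos.mpr (sub_ne_zero.mpr hne)
    set ε' := |A t - A t'| / 3 with hε'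
    have hε'pos : 0 < ε' := by positivity
    obtain ⟨δ, hδpos, hδ⟩ := Metric.uniformContinuous_iff.mp hβu ε' hε'pos
    obtain ⟨E, hEmono, hE0, hEδ, hEpt⟩ := H (min ε' δ) (lt_min hε'pos hδpos)
    have h1 := hEpt t ht
    have h2 := hEpt t' ht'
    have hEtt : |E t - E t'| ≤ E b - E a := by
      rw [abs_sub_le_iff]
      constructor
      · linarith [hEmono ht.2, hEmono ht'.1]
      · linarith [hEmono ht'.2, hEmono ht.1]
    have hdd : dist ((E t : ℝ) : AddCircle (1:ℝ)) ((E t' : ℝ) : AddCircle (1:ℝ)) < δ :=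
      lt_of_le_of_lt (le_trans (rhoinj_dist_le _ _) hEtt) (lt_of_lt_of_le hEδ (min_le_right _ _))
    have hβd : |β ((E t : ℝ) : AddCircle (1:ℝ)) - β ((E t' : ℝ) : AddCircle (1:ℝ))| < ε' := by
      have := hδ hdd
      rwa [Real.dist_eq] at this
    have hmin : (min ε' δ : ℝ) ≤ ε' := min_le_left _ _
    have : |A t - A t'| < 3 * ε' := by
      calc |A t - A t'| ≤ |A t - β ((E t : ℝ) : AddCircle (1:ℝ))|
            + |β ((E t : ℝ) : AddCircle (1:ℝ)) - β ((E t' : ℝ) : AddCircle (1:ℝ))|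
            + |β ((E t' : ℝ) : AddCircle (1:ℝ)) - A t'| := by
              have := abs_sub_le (A t) (β ((E t : ℝ) : AddCircle (1:ℝ))) (A t')
              have h3 := abs_sub_le (β ((E t : ℝ) : AddCircle (1:ℝ)))
                (β ((E t' : ℝ) : AddCircle (1:ℝ))) (A t')
              linarith
        _ < ε' + ε' + ε' := by
              have ha1 : |A t - β ((E t : ℝ) : AddCircle (1:ℝ))| < ε' := lt_of_lt_of_le h1 hmin
              have ha2 : |β ((E t' : ℝ) : AddCircle (1:ℝ)) - A t'| < ε' := by
                rw [abs_sub_comm]; exact lt_of_lt_of_le h2 hmin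
              linarith
        _ = 3 * ε' := by ring
    rw [hε'] at this
    linarith
  -- derivatives vanish, contradicting Morse
  set t0 := (a + b) / 2 with ht0def
  have ht0 : t0 ∈ Set.Ioo a b := ⟨by simp [ht0def]; linarith, by simp [ht0def]; linarith⟩
  have hd1 : ∀ u ∈ Set.Ioo a b, deriv A u = 0 := by
    intro u hu
    have heq : A =ᶠ[𝓝 u] fun _ => A t0 := by
      apply Filter.eventuallyEq_of_mem (Ioo_mem_nhds hu.1 hu.2)
      intro v hv
      exact hconst v (Set.Ioo_subset_Icc_self hv) t0 (Set.Ioo_subset_Icc_self ht0)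
    rw [heq.deriv_eq, deriv_const]
  have hd2 : deriv (deriv A) t0 = 0 := by
    have heq : deriv A =ᶠ[𝓝 t0] fun _ => (0 : ℝ) :=
      Filter.eventuallyEq_of_mem (Ioo_mem_nhds ht0.1 ht0.2) hd1
    rw [heq.deriv_eq, deriv_const]
  rcases hαM t0 with hc | hc
  · exact hc (hd1 t0 ht0)
  · exact hc hd2

private lemma rhoinj_master
    (α β : AddCircle (1:ℝ) → ℝ)
    (hαM : ∀ t : ℝ, deriv (fun s : ℝ => α (s : AddCircle (1:ℝ))) t ≠ 0 ∨
      deriv (deriv (fun s : ℝ => α (s : AddCircle (1:ℝ)))) t ≠ 0)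
    (hβ : Continuous β)
    (e : ℕ → AddCircle (1:ℝ) → AddCircle (1:ℝ))
    (E : ℕ → ℝ → ℝ)
    (hEmono : ∀ k, Monotone (E k))
    (hEper : ∀ k t, E k (t + 1) = E k t + 1)
    (hEe : ∀ k (t : ℝ), e k (t : AddCircle (1:ℝ)) = ((E k t : ℝ) : AddCircle (1:ℝ)))
    (bnd : ℕ → ℝ) (hbnd : Tendsto bnd atTop (𝓝 0))
    (hpt : ∀ k x, |α x - β (e k x)| ≤ bnd k)
    (x x' : AddCircle (1:ℝ)) (hxx : x ≠ x')
    (xs xs' : ℕ → AddCircle (1:ℝ))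
    (hxs : Tendsto xs atTop (𝓝 x)) (hxs' : Tendsto xs' atTop (𝓝 x'))
    (y : AddCircle (1:ℝ))
    (h1 : Tendsto (fun k => e k (xs k)) atTop (𝓝 y))
    (h2 : Tendsto (fun k => e k (xs' k)) atTop (𝓝 y)) : False := by
  -- choose lifts a < b < a + 1 of x, x'
  obtain ⟨a, ha⟩ := QuotientAddGroup.mk_surjective x
  obtain ⟨b0, hb0⟩ := QuotientAddGroup.mk_surjective x'
  set b := a + Int.fract (b0 - a) with hbdef
  have hfract : ((Int.fract (b0 - a) : ℝ) : AddCircle (1:ℝ)) = ((b0 - a : ℝ) : AddCircle (1:ℝ)) := by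
    rw [Int.fract]
    rw [QuotientAddGroup.mk_sub]
    have : ((((⌊b0 - a⌋ : ℤ) : ℝ)) : AddCircle (1:ℝ)) = 0 := by
      rw [QuotientAddGroup.eq_zero_iff]
      exact AddSubgroup.intCast_mem_zmultiples_one _
    rw [this, sub_zero]
  have hb : ((b : ℝ) : AddCircle (1:ℝ)) = x' := by
    rw [hbdef, QuotientAddGroup.mk_add, hfract, QuotientAddGroup.mk_sub, ha, hb0]
    abel
  have hfrne : Int.fract (b0 - a) ≠ 0 := by
    intro hzero
    apply hxx
    rw [← ha, ← hb, hbdef, hzero, add_zero]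
  have hab : a < b := by
    rw [hbdef]
    have := lt_of_le_of_ne (Int.fract_nonneg (b0 - a)) (Ne.symm hfrne)
    linarith
  have hba : b < a + 1 := by
    rw [hbdef]
    have := Int.fract_lt_one (b0 - a)
    linarith
  -- lifts of the sequences
  have hliftA : ∀ k, ∃ w : ℝ, ((w : ℝ) : AddCircle (1:ℝ)) = xs k - x ∧ |w| = ‖xs k - x‖ :=
    fun k => rhoinj_exists_lift _
  choose w hw hwn using hliftA
  have hliftB : ∀ k, ∃ w : ℝ, ((w : ℝ) : AddCircle (1:ℝ)) = xs' k - x' ∧ |w| = ‖xs' k - x'‖ :=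
    fun k => rhoinj_exists_lift _
  choose w' hw' hwn' using hliftB
  have hwz : Tendsto w atTop (𝓝 0) := by
    apply squeeze_zero_norm (fun k => le_of_eq (hwn k))
    have : Tendsto (fun k => xs k - x) atTop (𝓝 (x - x)) := hxs.sub tendsto_const_nhds
    rw [sub_self] at this
    simpa using this.norm
  have hwz' : Tendsto w' atTop (𝓝 0) := by
    apply squeeze_zero_norm (fun k => le_of_eq (hwn' k))
    have : Tendsto (fun k => xs' k - x') atTop (𝓝 (x' - x')) := hxs'.sub tendsto_const_nhds
    rw [sub_self] at this
    simpa using this.norm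
  set aa : ℕ → ℝ := fun k => a + w k with haa
  set bb : ℕ → ℝ := fun k => b + w' k with hbb
  have haak : ∀ k, ((aa k : ℝ) : AddCircle (1:ℝ)) = xs k := by
    intro k
    rw [haa]
    show ((a + w k : ℝ) : AddCircle (1:ℝ)) = xs k
    rw [QuotientAddGroup.mk_add, hw k, ha]
    abel
  have hbbk : ∀ k, ((bb k : ℝ) : AddCircle (1:ℝ)) = xs' k := by
    intro k
    rw [hbb]
    show ((b + w' k : ℝ) : AddCircle (1:ℝ)) = xs' k
    rw [QuotientAddGroup.mk_add, hw' k, hb]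
    abel
  set η := min ((b - a) / 4) ((1 - (b - a)) / 4) with hη
  have hηpos : 0 < η := by
    apply lt_min <;> [linarith; linarith]
  have hη1 : η ≤ (b - a) / 4 := min_le_left _ _
  have hη2 : η ≤ (1 - (b - a)) / 4 := min_le_right _ _
  set c : ℕ → ℝ := fun k => E k (bb k) - E k (aa k) with hc
  obtain ⟨S, hSev, hSmem⟩ : ∃ S : ℕ → Prop, (∀ᶠ k in atTop, S k) ∧
      (∀ k, S k → |aa k - a| < η ∧ |bb k - b| < η) := by
    refine ⟨fun k => |aa k - a| < η ∧ |bb k - b| < η, ?_, fun k hk => hk⟩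
    have h1' : ∀ᶠ k in atTop, |aa k - a| < η := by
      have : Tendsto (fun k => aa k - a) atTop (𝓝 0) := by
        simpa [haa] using hwz
      have := (this.norm : Tendsto (fun k => ‖aa k - a‖) atTop (𝓝 ‖(0:ℝ)‖))
      rw [norm_zero] at this
      have := this.eventually (eventually_lt_nhds hηpos)
      simpa [Real.norm_eq_abs] using this
    have h2' : ∀ᶠ k in atTop, |bb k - b| < η := by
      have : Tendsto (fun k => bb k - b) atTop (𝓝 0) := by
        simpa [hbb] using hwz'
      have := (this.norm : Tendsto (fun k => ‖bb k - b‖) atTop (𝓝 ‖(0:ℝ)‖))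
      rw [norm_zero] at this
      have := this.eventually (eventually_lt_nhds hηpos)
      simpa [Real.norm_eq_abs] using this
    exact h1'.and h2'
  -- basic consequences on S
  have hSfacts : ∀ k, S k → aa k ≤ a + η ∧ a - η ≤ aa k ∧ bb k ≤ b + η ∧ b - η ≤ bb k := by
    intro k hk
    obtain ⟨hk1, hk2⟩ := hSmem k hk
    rw [abs_lt] at hk1 hk2
    exact ⟨by linarith [hk1.2], by linarith [hk1.1], by linarith [hk2.2], by linarith [hk2.1]⟩
  have hc01 : ∀ k, S k → 0 ≤ c k ∧ c k ≤ 1 := by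
    intro k hk
    obtain ⟨hf1, hf2, hf3, hf4⟩ := hSfacts k hk
    have hord : aa k ≤ bb k := by linarith
    have hord2 : bb k ≤ aa k + 1 := by linarith
    constructor
    · simp only [hc, sub_nonneg]
      exact hEmono k hord
    · have := hEmono k hord2
      rw [hEper k (aa k)] at this
      simp only [hc]
      linarith
  -- dist of images equals min (c k) (1 - c k) on S
  have hdist : ∀ k, S k →
      dist (e k (xs k)) (e k (xs' k)) = min (c k) (1 - c k) := by
    intro k hk
    obtain ⟨hc0, hc1⟩ := hc01 k hk
    rw [← haak k, ← hbbk k, hEe k, hEe k]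
    rw [dist_eq_norm]
    have : ((E k (aa k) : ℝ) : AddCircle (1:ℝ)) - ((E k (bb k) : ℝ) : AddCircle (1:ℝ))
        = -(((c k : ℝ) : AddCircle (1:ℝ))) := by
      rw [← QuotientAddGroup.mk_sub]
      have : E k (aa k) - E k (bb k) = -(c k) := by simp only [hc, neg_sub]
      rw [this]
      rw [← QuotientAddGroup.mk_neg]
    rw [this, norm_neg]
    exact rhoinj_norm_min hc0 hc1
  have hdtend : Tendsto (fun k => dist (e k (xs k)) (e k (xs' k))) atTop (𝓝 0) := by
    have := h1.dist h2
    rwa [dist_self] at this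
  have hbndlt : ∀ ε > 0, ∀ᶠ k in atTop, bnd k < ε := by
    intro ε hε
    exact hbnd.eventually (eventually_lt_nhds hε)
  -- dichotomy
  have key : (∀ ε > 0, ∃ k, S k ∧ bnd k < ε ∧ c k < ε) ∨
      (∀ ε > 0, ∃ k, S k ∧ bnd k < ε ∧ 1 - c k < ε) := by
    by_contra hcon
    push_neg at hcon
    obtain ⟨⟨ε1, hε1, H1⟩, ⟨ε2, hε2, H2⟩⟩ := hcon
    set ε := min ε1 ε2 with hεdef
    have hεpos : 0 < ε := lt_min hε1 hε2
    have hev : ∀ᶠ k in atTop, S k ∧ bnd k < ε ∧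
        dist (e k (xs k)) (e k (xs' k)) < ε :=
      (hSev.and ((hbndlt ε hεpos).and (hdtend.eventually (eventually_lt_nhds hεpos)))).mono
        (fun k hk => ⟨hk.1, hk.2.1, hk.2.2⟩)
    obtain ⟨k, hkS, hkb, hkd⟩ := hev.exists
    rw [hdist k hkS] at hkd
    rcases min_lt_iff.mp hkd with hlt | hlt
    · exact absurd (H1 k hkS (lt_of_lt_of_le hkb (min_le_left _ _)))
        (not_le.mpr (lt_of_lt_of_le hlt (min_le_left _ _)))
    · exact absurd (H2 k hkS (lt_of_lt_of_le hkb (min_le_right _ _)))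
        (not_le.mpr (lt_of_lt_of_le hlt (min_le_right _ _)))
  rcases key with hcase | hcase
  · -- short arc [a+η, b-η] collapses
    apply rhoinj_collapse α β hαM hβ (a + η) (b - η) (by linarith)
    intro ε hε
    obtain ⟨k, hkS, hkb, hkc⟩ := hcase ε hε
    obtain ⟨hf1, hf2, hf3, hf4⟩ := hSfacts k hkS
    refine ⟨E k, hEmono k, ?_, ?_, ?_⟩
    · simp only [sub_nonneg]
      exact hEmono k (by linarith)
    · have hi1 : E k (aa k) ≤ E k (a + η) := hEmono k (by linarith)
      have hi2 : E k (b - η) ≤ E k (bb k) := hEmono k (by linarith)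
      have : E k (b - η) - E k (a + η) ≤ c k := by simp only [hc]; linarith
      linarith
    · intro t _
      rw [← hEe k t]
      exact lt_of_le_of_lt (hpt k _) hkb
  · -- long arc collapses: [b+η, a+1-η]
    apply rhoinj_collapse α β hαM hβ (b + η) (a + 1 - η) (by linarith)
    intro ε hε
    obtain ⟨k, hkS, hkb, hkc⟩ := hcase ε hε
    obtain ⟨hf1, hf2, hf3, hf4⟩ := hSfacts k hkS
    refine ⟨E k, hEmono k, ?_, ?_, ?_⟩
    · simp only [sub_nonneg]
      exact hEmono k (by linarith)
    · have hi1 : E k (a + 1 - η) ≤ E k (aa k + 1) := hEmono k (by linarith)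
      have hi2 : E k (bb k) ≤ E k (b + η) := hEmono k (by linarith)
      rw [hEper k (aa k)] at hi1
      have : E k (a + 1 - η) - E k (b + η) ≤ 1 - c k := by simp only [hc]; linarith
      linarith
    · intro t _
      rw [← hEe k t]
      exact lt_of_le_of_lt (hpt k _) hkb


private lemma rhoinj_inv_lift (f : AddCircle (1:ℝ) ≃ₜ AddCircle (1:ℝ)) (F : ℝ → ℝ)
    (hFc : Continuous F) (hFm : StrictMono F) (hFp : ∀ t, F (t + 1) = F t + 1)
    (hFf : ∀ t : ℝ, f (t : AddCircle (1:ℝ)) = ((F t : ℝ) : AddCircle (1:ℝ))) :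
    ∃ G : ℝ → ℝ, Monotone G ∧ (∀ t, G (t + 1) = G t + 1) ∧
      ∀ t : ℝ, f.symm (t : AddCircle (1:ℝ)) = ((G t : ℝ) : AddCircle (1:ℝ)) := by
  have hFn : ∀ (n : ℕ) (t : ℝ), F (t + n) = F t + n := by
    intro n
    induction n with
    | zero => simp
    | succ m ih =>
      intro t
      push_cast
      rw [← add_assoc, hFp (t + m), ih t]
      ring
  have htop : Tendsto F atTop atTop := by
    rw [tendsto_atTop_atTop]
    intro bd
    obtain ⟨n, hn⟩ := exists_nat_ge (bd - F 0)
    refine ⟨n, fun t ht => ?_⟩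
    have h1 : F (0 + (n : ℝ)) = F 0 + n := hFn n 0
    have h2 : F (0 + (n : ℝ)) ≤ F t := hFm.monotone (by simpa using ht)
    linarith
  have hbot : Tendsto F atBot atBot := by
    rw [tendsto_atBot_atBot]
    intro bd
    obtain ⟨n, hn⟩ := exists_nat_ge (F 0 - bd)
    refine ⟨-(n : ℝ), fun t ht => ?_⟩
    have h1 : F (-(n : ℝ) + (n : ℝ)) = F (-(n : ℝ)) + n := hFn n _
    simp only [neg_add_cancel] at h1
    have h2 : F t ≤ F (-(n : ℝ)) := hFm.monotone ht
    linarith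
  have hsurj : Function.Surjective F := hFc.surjective htop hbot
  set Feq := Equiv.ofBijective F ⟨hFm.injective, hsurj⟩ with hFeq
  set G : ℝ → ℝ := fun s => Feq.symm s with hG
  have hFG : ∀ s, F (G s) = s := fun s => Feq.apply_symm_apply s
  have hGmono : Monotone G := by
    intro s s' hss
    by_contra hcon
    push_neg at hcon
    have := hFm hcon
    rw [hFG s, hFG s'] at this
    exact absurd this (not_lt.mpr hss)
  have hGper : ∀ s, G (s + 1) = G s + 1 := by
    intro s
    apply hFm.injective
    rw [hFG, hFp, hFG]
  refine ⟨G, hGmono, hGper, fun t => ?_⟩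
  have : f ((G t : ℝ) : AddCircle (1:ℝ)) = (t : AddCircle (1:ℝ)) := by
    rw [hFf, hFG]
  rw [← this, Homeomorph.symm_apply_apply]

/-- Lemma `LemmaFond (iii)`: for the relation `ρ` built from the pointwise limits,
on the rational points, of a 0-approximating
sequence of orientation-preserving homeomorphisms of the circle, one has
`x = x'` iff `y = y'` for all `(x,y), (x',y') ∈ ρ`. -/
theorem rho_injectivity
    (φ ψ : AddCircle (1 : ℝ) → ℝ)
    (hφC : ContDiff ℝ 2 (fun t : ℝ => φ (t : AddCircle (1 : ℝ))))
    (hφMorse : ∀ t : ℝ, deriv (fun s : ℝ => φ (s : AddCircle (1 : ℝ))) t ≠ 0 ∨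
      deriv (deriv (fun s : ℝ => φ (s : AddCircle (1 : ℝ)))) t ≠ 0)
    (hψC : ContDiff ℝ 2 (fun t : ℝ => ψ (t : AddCircle (1 : ℝ))))
    (hψMorse : ∀ t : ℝ, deriv (fun s : ℝ => ψ (s : AddCircle (1 : ℝ))) t ≠ 0 ∨
      deriv (deriv (fun s : ℝ => ψ (s : AddCircle (1 : ℝ)))) t ≠ 0)
    (f : ℕ → AddCircle (1 : ℝ) ≃ₜ AddCircle (1 : ℝ))
    (hor : ∀ k : ℕ, ∃ F : ℝ → ℝ, Continuous F ∧ StrictMono F ∧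
      (∀ t : ℝ, F (t + 1) = F t + 1) ∧
      ∀ t : ℝ, f k (t : AddCircle (1 : ℝ)) = ((F t : ℝ) : AddCircle (1 : ℝ)))
    (happrox : Tendsto (fun k => ⨆ x, |φ x - ψ (f k x)|) atTop (𝓝 0))
    (D : Set (AddCircle (1 : ℝ)))
    (hD : D = Set.range (fun q : ℚ => ((q : ℝ) : AddCircle (1 : ℝ))))
    (g h : AddCircle (1 : ℝ) → AddCircle (1 : ℝ))
    (hg : ∀ d ∈ D, Tendsto (fun k => f k d) atTop (𝓝 (g d)))
    (hh : ∀ d ∈ D, Tendsto (fun k => (f k).symm d) atTop (𝓝 (h d)))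
    (ρ : Set (AddCircle (1 : ℝ) × AddCircle (1 : ℝ)))
    (hρ : ρ = {p | (p.1 ∈ D ∧ p.2 = g p.1) ∨ (p.2 ∈ D ∧ p.1 = h p.2)}) :
    ∀ p ∈ ρ, ∀ p' ∈ ρ, (p.1 = p'.1 ↔ p.2 = p'.2) := by
  -- continuity of φ and ψ on the circle
  have hq : IsQuotientMap ((↑) : ℝ → AddCircle (1:ℝ)) :=
    QuotientAddGroup.isQuotientMap_mk _
  have hφcont : Continuous φ := hq.continuous_iff.mpr hφC.continuous
  have hψcont : Continuous ψ := hq.continuous_iff.mpr hψC.continuous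
  -- the approximation bound
  set s : ℕ → ℝ := fun k => ⨆ x, |φ x - ψ (f k x)| with hsdef
  have hptf : ∀ k (x : AddCircle (1:ℝ)), |φ x - ψ (f k x)| ≤ s k := by
    intro k x
    have hcont : Continuous (fun z => |φ z - ψ (f k z)|) := by fun_prop
    exact le_ciSup (isCompact_range hcont).bddAbove x
  have hpts : ∀ k (x : AddCircle (1:ℝ)), |ψ x - φ ((f k).symm x)| ≤ s k := by
    intro k x
    have := hptf k ((f k).symm x)
    rw [Homeomorph.apply_symm_apply] at this
    rwa [abs_sub_comm]
  -- lifts of f k and (f k).symm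
  choose F hFc hFm hFp hFf using hor
  have hGex : ∀ k, ∃ G : ℝ → ℝ, Monotone G ∧ (∀ t, G (t + 1) = G t + 1) ∧
      ∀ t : ℝ, (f k).symm (t : AddCircle (1:ℝ)) = ((G t : ℝ) : AddCircle (1:ℝ)) :=
    fun k => rhoinj_inv_lift (f k) (F k) (hFc k) (hFm k) (hFp k) (hFf k)
  choose G hGm hGp hGf using hGex
  -- instantiated master lemmas
  have MF := rhoinj_master φ ψ hφMorse hψcont (fun k z => f k z) F
    (fun k => (hFm k).monotone) hFp hFf s happrox hptf
  have MS := rhoinj_master ψ φ hψMorse hφcont (fun k z => (f k).symm z) G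
    hGm hGp hGf s happrox hpts
  -- the three claims
  have claimA : ∀ u v : AddCircle (1:ℝ), u ∈ D → v ∈ D → g u = g v → u = v := by
    intro u v hu hv hguv
    by_contra hne
    exact MF u v hne (fun _ => u) (fun _ => v) tendsto_const_nhds tendsto_const_nhds
      (g u) (hg u hu) (by rw [hguv]; exact hg v hv)
  have claimB : ∀ u v : AddCircle (1:ℝ), u ∈ D → v ∈ D → h u = h v → u = v := by
    intro u v hu hv hhuv
    by_contra hne
    exact MS u v hne (fun _ => u) (fun _ => v) tendsto_const_nhds tendsto_const_nhds
      (h u) (hh u hu) (by rw [hhuv]; exact hh v hv)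
  have claimC : ∀ u v : AddCircle (1:ℝ), u ∈ D → v ∈ D → (u = h v ↔ g u = v) := by
    intro u v hu hv
    constructor
    · intro huv
      by_contra hne
      refine MS v (g u) (Ne.symm hne) (fun _ => v) (fun k => f k u)
        tendsto_const_nhds (hg u hu) u (by rw [huv]; exact hh v hv) ?_
      simp only [Homeomorph.symm_apply_apply]
      exact tendsto_const_nhds
    · intro hguv
      by_contra hne
      refine MF u (h v) hne (fun _ => u) (fun k => (f k).symm v)
        tendsto_const_nhds (hh v hv) v (by rw [← hguv]; exact hg u hu) ?_
      simp only [Homeomorph.apply_symm_apply]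
      exact tendsto_const_nhds
  -- assembly
  intro p hp p' hp'
  rw [hρ] at hp hp'
  simp only [Set.mem_setOf_eq] at hp hp'
  rcases hp with ⟨hd, hpy⟩ | ⟨hd, hpx⟩ <;> rcases hp' with ⟨hd', hpy'⟩ | ⟨hd', hpx'⟩
  · constructor
    · intro hx; rw [hpy, hpy', hx]
    · intro hy; exact claimA p.1 p'.1 hd hd' (by rw [← hpy, ← hpy', hy])
  · constructor
    · intro hx
      rw [hpy]
      exact (claimC p.1 p'.2 hd hd').mp (hx.trans hpx')
    · intro hy
      rw [hpx']
      exact (claimC p.1 p'.2 hd hd').mpr (by rw [← hpy]; exact hy)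
  · constructor
    · intro hx
      rw [hpy']
      exact ((claimC p'.1 p.2 hd' hd).mp (hx.symm.trans hpx)).symm
    · intro hy
      rw [hpx]
      exact ((claimC p'.1 p.2 hd' hd).mpr ((hy.trans hpy').symm)).symm
  · constructor
    · intro hx; exact claimB p.2 p'.2 hd hd' (by rw [← hpx, ← hpx', hx])
    · intro hy; rw [hpx, hpx', hy]
end
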